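/- arXiv:cond-mat/0610663 — 3 statements merged into one kernel-verified Lean document; each statement's English description precedes it below -/
import Mathlib

section
/- Fix p \in (0,1] and q := 1-p. For every y \in \mathbb{R}, \lim_{N\to\infty} (1/N) \log E[\exp(y S_N) \, ; \, S_n \ne 0 \text{ for all } n = 1, \dots, N] = \log(p\cosh(y) + q). -/
open Filter Finset

noncomputable section
open scoped Classical

/-- The three possible increments of the `(p,q)`-walk: `-1, 0, +1`. -/
def step : Fin 3 → ℤ := ![-1, 0, 1]

/-- The probability weights of the three increments: `p/2, q = 1-p, p/2`. -/
def wt (p : ℝ) : Fin 3 → ℝ := ![p / 2, 1 - p, p / 2]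

/-- Position of the walk after `n` steps, given the increments `ξ`. -/
def pos {N : ℕ} (ξ : Fin N → Fin 3) (n : ℕ) : ℤ :=
  ∑ i : Fin N, if (i : ℕ) < n then step (ξ i) else 0

/-- Probability weight of the path with increments `ξ`. -/
def pwt (p : ℝ) {N : ℕ} (ξ : Fin N → Fin 3) : ℝ := ∏ i : Fin N, wt p (ξ i)

/-- The pinning partition function `Z_{N,ω}^{β,f}` of the `(p,q)`-walk with
charges `ω`, inverse temperature `β` and force `f`. -/
def Z (p : ℝ) (ω : ℕ → ℝ) (β f : ℝ) (N : ℕ) : ℝ :=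
  ∑ ξ : Fin N → Fin 3,
    pwt p ξ *
      Real.exp (β * ∑ n ∈ Finset.Icc 1 N, (if pos ξ n = 0 then ω n else 0)
        + β * f * ((pos ξ N : ℤ) : ℝ))

/-- `g(y) = log (p cosh y + q)`. -/
def g (p y : ℝ) : ℝ := Real.log (p * Real.cosh y + (1 - p))

/-- `E[exp(y S_N); S_n ≠ 0 for n = 1, …, N]`. -/
def Zfree (p y : ℝ) (N : ℕ) : ℝ :=
  ∑ ξ : Fin N → Fin 3,
    if ∀ n ∈ Finset.Icc 1 N, pos ξ n ≠ 0 then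
      pwt p ξ * Real.exp (y * ((pos ξ N : ℤ) : ℝ))
    else 0

open Fin.NatCast

lemma wt_nonneg {p : ℝ} (hp : 0 < p) (hp1 : p ≤ 1) (j : Fin 3) : 0 ≤ wt p j := by
  fin_cases j <;> simp [wt] <;> linarith

lemma pwt_nonneg {p : ℝ} (hp : 0 < p) (hp1 : p ≤ 1) {N : ℕ} (ξ : Fin N → Fin 3) :
    0 ≤ pwt p ξ :=
  Finset.prod_nonneg fun i _ => wt_nonneg hp hp1 _

lemma pos_top {N : ℕ} (ξ : Fin N → Fin 3) : pos ξ N = ∑ i : Fin N, step (ξ i) := by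
  unfold pos; exact Finset.sum_congr rfl fun i _ => by simp [i.isLt]

lemma sum_pwt_exp (p y : ℝ) (N : ℕ) :
    ∑ ξ : Fin N → Fin 3, pwt p ξ * Real.exp (y * ((pos ξ N : ℤ) : ℝ))
      = (p * Real.cosh y + (1 - p)) ^ N := by
  have h1 : ∀ ξ : Fin N → Fin 3, pwt p ξ * Real.exp (y * ((pos ξ N : ℤ) : ℝ))
      = ∏ i : Fin N, (wt p (ξ i) * Real.exp (y * ((step (ξ i) : ℤ) : ℝ))) := by
    intro ξ
    rw [Finset.prod_mul_distrib, pwt, pos_top]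
    congr 1
    rw [← Real.exp_sum]
    congr 1
    push_cast
    rw [Finset.mul_sum]
  simp_rw [h1]
  have h2 : ∏ i : Fin N, (∑ j : Fin 3, (wt p j * Real.exp (y * ((step j : ℤ) : ℝ))))
      = ∑ ξ ∈ Fintype.piFinset (fun _ : Fin N => (univ : Finset (Fin 3))),
          ∏ i : Fin N, (wt p (ξ i) * Real.exp (y * ((step (ξ i) : ℤ) : ℝ))) :=
    Finset.prod_univ_sum _ _
  rw [Fintype.piFinset_univ] at h2
  rw [← h2, Finset.prod_const, Finset.card_univ, Fintype.card_fin]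
  congr 1
  rw [Fin.sum_univ_three]
  simp [wt, step, Real.cosh_eq]
  ring

lemma pwt_sum (p : ℝ) (N : ℕ) : ∑ ξ : Fin N → Fin 3, pwt p ξ = 1 := by
  have := sum_pwt_exp p 0 N
  simp [Real.cosh_zero] at this
  simpa using this

def flip3 : Fin 3 → Fin 3 := ![2, 1, 0]

lemma flip3_flip3 (j : Fin 3) : flip3 (flip3 j) = j := by fin_cases j <;> rfl
lemma wt_flip3 (p : ℝ) (j : Fin 3) : wt p (flip3 j) = wt p j := by fin_cases j <;> rfl
lemma step_flip3 (j : Fin 3) : step (flip3 j) = - step j := by fin_cases j <;> rfl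

lemma pwt_flip {p : ℝ} {N : ℕ} (ξ : Fin N → Fin 3) :
    pwt p (fun i => flip3 (ξ i)) = pwt p ξ :=
  Finset.prod_congr rfl fun i _ => wt_flip3 p (ξ i)

lemma pos_flip {N : ℕ} (ξ : Fin N → Fin 3) (n : ℕ) :
    pos (fun i => flip3 (ξ i)) n = - pos ξ n := by
  unfold pos
  rw [← Finset.sum_neg_distrib]
  refine Finset.sum_congr rfl fun i _ => ?_
  split_ifs <;> simp [step_flip3]

lemma flip_bij {N : ℕ} :
    Function.Bijective (fun ξ : Fin N → Fin 3 => (fun i => flip3 (ξ i))) := by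
  apply Function.bijective_iff_has_inverse.2
  exact ⟨fun η i => flip3 (η i), fun ξ => funext fun i => flip3_flip3 _,
    fun η => funext fun i => flip3_flip3 _⟩

lemma Zfree_neg (p y : ℝ) (N : ℕ) : Zfree p (-y) N = Zfree p y N := by
  unfold Zfree
  refine Fintype.sum_bijective _ flip_bij _ _ fun ξ => ?_
  rw [pwt_flip]
  have hc : (∀ n ∈ Finset.Icc 1 N, pos (fun i => flip3 (ξ i)) n ≠ 0)
      ↔ (∀ n ∈ Finset.Icc 1 N, pos ξ n ≠ 0) := by
    simp [pos_flip]
  simp only [pos_flip, ne_eq, neg_eq_zero, Int.cast_neg, mul_neg, neg_mul]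

lemma pos_eq_range {N : ℕ} [NeZero N] (ξ : Fin N → Fin 3) {n : ℕ} (hn : n ≤ N) :
    pos ξ n = ∑ i ∈ Finset.range n, step (ξ (i : Fin N)) := by
  unfold pos
  have h1 : ∀ i : Fin N, (if (i : ℕ) < n then step (ξ i) else 0)
      = (fun k : ℕ => if k < n then step (ξ (k : Fin N)) else 0) (i : ℕ) := by
    intro i; simp [Fin.cast_val_eq_self]
  rw [Finset.sum_congr rfl fun i _ => h1 i,
    Fin.sum_univ_eq_sum_range (fun k : ℕ => if k < n then step (ξ (k : Fin N)) else 0) N,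
    ← Finset.sum_filter]
  congr 1
  ext k
  simp only [Finset.mem_filter, Finset.mem_range]
  omega

lemma pwt_rot {p : ℝ} {N : ℕ} [NeZero N] (ξ : Fin N → Fin 3) (c : Fin N) :
    pwt p (fun i => ξ (i + c)) = pwt p ξ := by
  unfold pwt
  exact Equiv.prod_comp (Equiv.addRight c) (fun i => wt p (ξ i))

lemma posN_rot {N : ℕ} [NeZero N] (ξ : Fin N → Fin 3) (c : Fin N) :
    pos (fun i => ξ (i + c)) N = pos ξ N := by
  rw [pos_top, pos_top]
  exact Equiv.sum_comp (Equiv.addRight c) (fun i => step (ξ i))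

lemma pos_rot {N : ℕ} [NeZero N] (ξ : Fin N → Fin 3) (r : ℕ) {n : ℕ} (hn : n ≤ N) :
    pos (fun i => ξ (i + (r : Fin N))) n
      = (∑ i ∈ Finset.range (r + n), step (ξ (i : Fin N)))
        - ∑ i ∈ Finset.range r, step (ξ (i : Fin N)) := by
  rw [pos_eq_range _ hn, ← Finset.sum_Ico_eq_sub _ (Nat.le_add_right r n),
      Finset.sum_Ico_eq_sum_range]
  simp only [Nat.add_sub_cancel_left]
  refine Finset.sum_congr rfl fun i _ => ?_
  congr 2
  rw [Nat.cast_add, add_comm]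

lemma cycle_exists (a : ℕ → ℤ) (N : ℕ) (hN : 0 < N) (hper : ∀ i, a (i + N) = a i)
    (h1 : 1 ≤ ∑ i ∈ Finset.range N, a i) :
    ∃ r < N, ∀ n, 1 ≤ n → n ≤ N →
      1 ≤ (∑ i ∈ Finset.range (r + n), a i) - ∑ i ∈ Finset.range r, a i := by
  set T : ℕ → ℤ := fun n => ∑ i ∈ Finset.range n, a i with hT
  have hTper : ∀ j, T (N + j) = T N + T j := by
    intro j
    induction j with
    | zero => simp [hT]
    | succ j ih =>
        have e1 : N + (j + 1) = (N + j) + 1 := by omega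
        rw [e1]
        show (∑ i ∈ Finset.range ((N + j) + 1), a i) = T N + T (j + 1)
        rw [Finset.sum_range_succ]
        have : a (N + j) = a j := by rw [add_comm]; exact hper j
        rw [this]
        show T (N + j) + a j = T N + T (j + 1)
        rw [ih]
        show T N + T j + a j = T N + (∑ i ∈ Finset.range (j + 1), a i)
        rw [Finset.sum_range_succ]
        ring
  obtain ⟨j₀, hj₀mem, hj₀⟩ := Finset.exists_min_image (Finset.range (N+1)) T ⟨0, by simp⟩
  set P : ℕ → Prop := fun j => ∀ k, k ≤ N → T j ≤ T k with hP
  have hj₀P : P j₀ := fun k hk => hj₀ k (Finset.mem_range.2 (Nat.lt_succ_of_le hk))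
  have hj₀N : j₀ ≤ N := Nat.lt_succ_iff.1 (Finset.mem_range.1 hj₀mem)
  set r := Nat.findGreatest P N with hr
  have hmin : ∀ k, k ≤ N → T r ≤ T k := Nat.findGreatest_spec hj₀N hj₀P
  have hrN : r ≤ N := Nat.findGreatest_le N
  have hT0 : T 0 = 0 := by simp [hT]
  have hTN : 1 ≤ T N := h1
  have hrltN : r < N := by
    rcases lt_or_eq_of_le hrN with h | h
    · exact h
    · exfalso
      have h0 := hmin 0 (Nat.zero_le _)
      rw [hT0, h] at h0
      omega
  refine ⟨r, hrltN, ?_⟩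
  intro n hn1 hnN
  by_cases hc : r + n ≤ N
  · have hle : T r ≤ T (r + n) := hmin _ hc
    have hne : T r ≠ T (r + n) := by
      intro heq
      have hgt : r < r + n := by omega
      have hnP := Nat.findGreatest_is_greatest (hr ▸ hgt) hc
      exact hnP fun k hk => heq ▸ hmin k hk
    show 1 ≤ T (r + n) - T r
    omega
  · push_neg at hc
    have hjle : r + n - N ≤ N := by omega
    have e2 : N + (r + n - N) = r + n := by omega
    have hTeq : T (r + n) = T N + T (r + n - N) := by
      have h := hTper (r + n - N)
      rw [e2] at h
      exact h
    have hTj : T r ≤ T (r + n - N) := hmin _ hjle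
    show 1 ≤ T (r + n) - T r
    omega

lemma pwt_cons (p : ℝ) {K : ℕ} (j : Fin 3) (η : Fin K → Fin 3) :
    pwt p (Fin.cons j η) = wt p j * pwt p η := by
  unfold pwt
  rw [Fin.prod_univ_succ]
  simp

lemma pos_cons_top {K : ℕ} (j : Fin 3) (η : Fin K → Fin 3) :
    pos (Fin.cons j η : Fin (K+1) → Fin 3) (K+1) = step j + pos η K := by
  rw [pos_top, pos_top, Fin.sum_univ_succ]
  simp

lemma prob_zero_le {p : ℝ} (hp : 0 < p) (hp1 : p ≤ 1) (K : ℕ) :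
    (∑ ξ : Fin (K+1) → Fin 3, if pos ξ (K+1) = 0 then pwt p ξ else 0)
      ≤ max (1 - p) (1 / 2) := by
  set B : ℤ → ℝ := fun k => ∑ η : Fin K → Fin 3, if pos η K = k then pwt p η else 0 with hB
  have hBnn : ∀ k, 0 ≤ B k := by
    intro k
    refine Finset.sum_nonneg fun η _ => ?_
    split_ifs
    · exact pwt_nonneg hp hp1 η
    · exact le_refl 0
  have hBsum : B 1 + B 0 + B (-1) ≤ 1 := by
    rw [hB, ← Finset.sum_add_distrib, ← Finset.sum_add_distrib, ← pwt_sum p K]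
    refine Finset.sum_le_sum fun η _ => ?_
    have := pwt_nonneg hp hp1 η
    split_ifs <;> simp_all <;> omega
  have hsplit : (∑ ξ : Fin (K+1) → Fin 3, if pos ξ (K+1) = 0 then pwt p ξ else 0)
      = p / 2 * B 1 + (1 - p) * B 0 + p / 2 * B (-1) := by
    rw [← Equiv.sum_comp (Fin.consEquiv (fun _ : Fin (K+1) => Fin 3))
      (fun ξ : Fin (K+1) → Fin 3 => if pos ξ (K+1) = 0 then pwt p ξ else 0)]
    rw [Fintype.sum_prod_type]
    have hterm : ∀ (j : Fin 3) (η : Fin K → Fin 3),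
        (if pos ((Fin.consEquiv (fun _ : Fin (K+1) => Fin 3)) (j, η)) (K+1) = 0
          then pwt p ((Fin.consEquiv (fun _ : Fin (K+1) => Fin 3)) (j, η)) else 0)
        = wt p j * (if pos η K = -step j then pwt p η else 0) := by
      intro j η
      have he : (Fin.consEquiv (fun _ : Fin (K+1) => Fin 3)) (j, η) = Fin.cons j η := rfl
      rw [he, pwt_cons, pos_cons_top]
      have hcond : (step j + pos η K = 0) ↔ (pos η K = -step j) := by omega
      rw [if_congr hcond rfl rfl, mul_ite, mul_zero]
    simp_rw [hterm]
    rw [Fin.sum_univ_three]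
    have h0 : (-step 0 : ℤ) = 1 := by decide
    have h1 : (-step 1 : ℤ) = 0 := by decide
    have h2 : (-step 2 : ℤ) = -1 := by decide
    rw [h0, h1, h2]
    have w0 : wt p 0 = p / 2 := rfl
    have w1 : wt p 1 = 1 - p := rfl
    have w2 : wt p 2 = p / 2 := rfl
    rw [w0, w1, w2, ← Finset.mul_sum, ← Finset.mul_sum, ← Finset.mul_sum]
  rw [hsplit]
  set M := max (1 - p) (1 / 2 : ℝ) with hM
  have hM1 : 1 - p ≤ M := le_max_left _ _
  have hM2 : p / 2 ≤ M := le_trans (by linarith) (le_max_right _ _)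
  have hM0 : 0 ≤ M := le_trans (by norm_num) (le_max_right _ _)
  nlinarith [mul_nonneg (sub_nonneg.2 hM2) (hBnn 1), mul_nonneg (sub_nonneg.2 hM1) (hBnn 0),
    mul_nonneg (sub_nonneg.2 hM2) (hBnn (-1)), mul_le_mul_of_nonneg_left hBsum hM0]

lemma counting {p : ℝ} (hp : 0 < p) (hp1 : p ≤ 1) {y : ℝ} {N : ℕ} (hN : 0 < N) :
    (∑ ξ : Fin N → Fin 3,
        if 1 ≤ pos ξ N then pwt p ξ * Real.exp (y * ((pos ξ N : ℤ) : ℝ)) else 0)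
      ≤ (N : ℝ) * Zfree p y N := by
  haveI : NeZero N := ⟨hN.ne'⟩
  set F : (Fin N → Fin 3) → ℝ :=
    fun ξ => pwt p ξ * Real.exp (y * ((pos ξ N : ℤ) : ℝ)) with hF
  have hF0 : ∀ ξ, 0 ≤ F ξ := fun ξ => mul_nonneg (pwt_nonneg hp hp1 ξ) (Real.exp_nonneg _)
  set G : (Fin N → Fin 3) → Prop := fun η => ∀ n, 1 ≤ n → n ≤ N → 1 ≤ pos η n with hG
  set ZP : ℝ := ∑ η : Fin N → Fin 3, if G η then F η else 0 with hZP
  -- rotation invariance of F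
  have hFrot : ∀ (ξ : Fin N → Fin 3) (c : Fin N), F (fun i => ξ (i + c)) = F ξ := by
    intro ξ c
    rw [hF]
    simp only
    rw [pwt_rot, posN_rot]
  -- each rotated sum equals ZP
  have h2 : ∀ r : ℕ, (∑ ξ : Fin N → Fin 3,
      if G (fun i => ξ (i + (r : Fin N))) then F ξ else 0) = ZP := by
    intro r
    set c : Fin N := (r : Fin N)
    have hbij : Function.Bijective (fun ξ : Fin N → Fin 3 => (fun i => ξ (i + c))) := by
      apply Function.bijective_iff_has_inverse.2
      refine ⟨fun η => (fun i => η (i - c)), fun ξ => ?_, fun η => ?_⟩ <;>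
        funext i <;> simp
    rw [hZP]
    refine Fintype.sum_bijective _ hbij _ _ fun ξ => ?_
    show (if G (fun i => ξ (i + c)) then F ξ else 0)
        = (if G (fun i => ξ (i + c)) then F (fun i => ξ (i + c)) else 0)
    rw [hFrot ξ c]
  -- pointwise lower bound
  have h3 : ∀ ξ : Fin N → Fin 3,
      (if 1 ≤ pos ξ N then F ξ else 0)
        ≤ ∑ r ∈ Finset.range N, if G (fun i => ξ (i + (r : Fin N))) then F ξ else 0 := by
    intro ξ
    split_ifs with hξ
    · -- apply cycle lemma
      obtain ⟨r, hrN, hr⟩ := cycle_exists (fun i => step (ξ (i : Fin N))) N hN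
        (by
          intro i
          have hcast : ((i + N : ℕ) : Fin N) = ((i : ℕ) : Fin N) := by
            rw [Nat.cast_add, Fin.natCast_self, add_zero]
          simp only [hcast])
        (by rw [← pos_eq_range ξ (le_refl N)]; exact hξ)
      have hGrot : G (fun i => ξ (i + (r : Fin N))) := by
        intro n hn1 hnN
        rw [pos_rot ξ r hnN]
        exact hr n hn1 hnN
      calc F ξ = (if G (fun i => ξ (i + (r : Fin N))) then F ξ else 0) := by
            rw [if_pos hGrot]
        _ ≤ _ := Finset.single_le_sum
            (f := fun r' : ℕ => if G (fun i => ξ (i + (r' : Fin N))) then F ξ else 0)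
            (fun r' _ => by
              show (0:ℝ) ≤ if G (fun i => ξ (i + (r' : Fin N))) then F ξ else 0
              split_ifs
              exacts [hF0 ξ, le_refl 0])
            (Finset.mem_range.2 hrN)
    · exact Finset.sum_nonneg fun r _ => by split_ifs; exacts [hF0 ξ, le_refl 0]
  -- Zplus ≤ Zfree
  have h1 : ZP ≤ Zfree p y N := by
    rw [hZP]
    unfold Zfree
    refine Finset.sum_le_sum fun η _ => ?_
    by_cases hGη : G η
    · rw [if_pos hGη, if_pos]
      intro n hn
      rw [Finset.mem_Icc] at hn
      have := hGη n hn.1 hn.2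
      omega
    · rw [if_neg hGη]
      split_ifs
      exacts [hF0 η, le_refl 0]
  calc (∑ ξ : Fin N → Fin 3, if 1 ≤ pos ξ N then F ξ else 0)
      ≤ ∑ ξ : Fin N → Fin 3, ∑ r ∈ Finset.range N,
          (if G (fun i => ξ (i + (r : Fin N))) then F ξ else 0) :=
        Finset.sum_le_sum fun ξ _ => h3 ξ
    _ = ∑ r ∈ Finset.range N, ∑ ξ : Fin N → Fin 3,
          (if G (fun i => ξ (i + (r : Fin N))) then F ξ else 0) := Finset.sum_comm
    _ = ∑ r ∈ Finset.range N, ZP := Finset.sum_congr rfl fun r _ => h2 r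
    _ = (N : ℝ) * ZP := by rw [Finset.sum_const, Finset.card_range, nsmul_eq_mul]
    _ ≤ (N : ℝ) * Zfree p y N := mul_le_mul_of_nonneg_left h1 (Nat.cast_nonneg N)

lemma Apos_lower {p : ℝ} (hp : 0 < p) (hp1 : p ≤ 1) {y : ℝ} (hy : 0 ≤ y) {N : ℕ}
    (hN : 0 < N) :
    (p * Real.cosh y + (1 - p)) ^ N * ((1 - max (1 - p) (1 / 2)) / 2)
      ≤ ∑ ξ : Fin N → Fin 3,
          if 1 ≤ pos ξ N then pwt p ξ * Real.exp (y * ((pos ξ N : ℤ) : ℝ)) else 0 := by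
  set lam : ℝ := p * Real.cosh y + (1 - p) with hlam
  have hlam1 : 1 ≤ lam := by
    have := Real.one_le_cosh y
    nlinarith
  set F : (Fin N → Fin 3) → ℝ :=
    fun ξ => pwt p ξ * Real.exp (y * ((pos ξ N : ℤ) : ℝ)) with hF
  have hF0 : ∀ ξ, 0 ≤ F ξ := fun ξ => mul_nonneg (pwt_nonneg hp hp1 ξ) (Real.exp_nonneg _)
  set Ap : ℝ := ∑ ξ : Fin N → Fin 3, if 1 ≤ pos ξ N then F ξ else 0 with hAp
  set A0 : ℝ := ∑ ξ : Fin N → Fin 3, if pos ξ N = 0 then F ξ else 0 with hA0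
  set Am : ℝ := ∑ ξ : Fin N → Fin 3, if pos ξ N ≤ -1 then F ξ else 0 with hAm
  have htot : lam ^ N = Ap + A0 + Am := by
    rw [hAp, hA0, hAm, ← Finset.sum_add_distrib, ← Finset.sum_add_distrib,
      ← sum_pwt_exp p y N]
    refine Finset.sum_congr rfl fun ξ _ => ?_
    show F ξ = _
    rcases lt_trichotomy (pos ξ N) 0 with h | h | h
    · rw [if_neg (by omega), if_neg (by omega), if_pos (by omega)]; ring
    · rw [if_neg (by omega), if_pos h, if_neg (by omega)]; ring
    · rw [if_pos (by omega), if_neg (by omega), if_neg (by omega)]; ring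
  -- A0 ≤ M
  have hA0le : A0 ≤ max (1 - p) (1 / 2) := by
    obtain ⟨K, rfl⟩ : ∃ K, N = K + 1 := ⟨N - 1, by omega⟩
    have heq : A0 = ∑ ξ : Fin (K+1) → Fin 3, if pos ξ (K+1) = 0 then pwt p ξ else 0 := by
      rw [hA0]
      refine Finset.sum_congr rfl fun ξ _ => ?_
      split_ifs with h
      · rw [hF]
        simp only
        rw [h]
        norm_num
      · rfl
    rw [heq]
    exact prob_zero_le hp hp1 K
  -- Am ≤ Ap
  have hAmle : Am ≤ Ap := by
    have hAm2 : Am = ∑ ξ : Fin N → Fin 3,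
        if 1 ≤ pos ξ N then pwt p ξ * Real.exp (y * (-((pos ξ N : ℤ) : ℝ))) else 0 := by
      rw [hAm]
      refine (Fintype.sum_bijective _ flip_bij _ _ fun ξ => ?_).symm
      show (if 1 ≤ pos ξ N then pwt p ξ * Real.exp (y * (-((pos ξ N : ℤ) : ℝ))) else 0)
          = (if pos (fun i => flip3 (ξ i)) N ≤ -1
              then F (fun i => flip3 (ξ i)) else 0)
      rw [hF]
      simp only [pos_flip, pwt_flip]
      have hcond : (-pos ξ N ≤ -1) ↔ (1 ≤ pos ξ N) := by omega
      rw [if_congr hcond rfl rfl]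
      push_cast
      ring_nf
    rw [hAm2, hAp]
    refine Finset.sum_le_sum fun ξ _ => ?_
    split_ifs with h
    · refine mul_le_mul_of_nonneg_left ?_ (pwt_nonneg hp hp1 ξ)
      apply Real.exp_le_exp.2
      have h1 : (1 : ℝ) ≤ ((pos ξ N : ℤ) : ℝ) := by exact_mod_cast h
      nlinarith
    · exact le_refl 0
  -- conclude
  have hM0 : 0 ≤ max (1 - p) (1 / 2 : ℝ) := le_trans (by norm_num) (le_max_right _ _)
  have hlamN : 1 ≤ lam ^ N := one_le_pow₀ hlam1
  show lam ^ N * ((1 - max (1 - p) (1 / 2)) / 2) ≤ Ap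
  nlinarith [mul_nonneg hM0 (sub_nonneg.2 hlamN)]

lemma Zfree_le {p : ℝ} (hp : 0 < p) (hp1 : p ≤ 1) (y : ℝ) (N : ℕ) :
    Zfree p y N ≤ (p * Real.cosh y + (1 - p)) ^ N := by
  rw [← sum_pwt_exp p y N]
  unfold Zfree
  refine Finset.sum_le_sum fun ξ _ => ?_
  split_ifs
  · exact le_refl _
  · exact mul_nonneg (pwt_nonneg hp hp1 ξ) (Real.exp_nonneg _)

lemma main_nonneg (p : ℝ) (hp : 0 < p) (hp1 : p ≤ 1) (y : ℝ) (hy : 0 ≤ y) :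
    Tendsto (fun N : ℕ => Real.log (Zfree p y N) / N) atTop
      (nhds (Real.log (p * Real.cosh y + (1 - p)))) := by
  set lam : ℝ := p * Real.cosh y + (1 - p) with hlam
  have hlam1 : 1 ≤ lam := by
    have := Real.one_le_cosh y
    nlinarith
  have hlam0 : 0 < lam := by linarith
  set M : ℝ := max (1 - p) (1 / 2) with hM
  have hMlt1 : M < 1 := by
    rw [hM]
    apply max_lt <;> norm_num
    linarith
  set c : ℝ := (1 - M) / 2 with hc
  have hc0 : 0 < c := by rw [hc]; linarith
  have hlow : ∀ N : ℕ, 0 < N → lam ^ N * c / N ≤ Zfree p y N := by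
    intro N hN
    have hNpos : (0 : ℝ) < N := by exact_mod_cast hN
    rw [div_le_iff₀ hNpos]
    calc lam ^ N * c ≤ _ := Apos_lower hp hp1 hy hN
      _ ≤ (N : ℝ) * Zfree p y N := counting hp hp1 hN
      _ = Zfree p y N * N := mul_comm _ _
  have hZpos : ∀ N : ℕ, 0 < N → 0 < Zfree p y N := by
    intro N hN
    refine lt_of_lt_of_le ?_ (hlow N hN)
    have hNpos : (0 : ℝ) < N := by exact_mod_cast hN
    positivity
  have hlogup : ∀ᶠ N : ℕ in atTop, Real.log (Zfree p y N) / N ≤ Real.log lam := by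
    filter_upwards [eventually_gt_atTop 0] with N hN
    have hNpos : (0 : ℝ) < N := by exact_mod_cast hN
    rw [div_le_iff₀ hNpos]
    calc Real.log (Zfree p y N) ≤ Real.log (lam ^ N) :=
          Real.log_le_log (hZpos N hN) (Zfree_le hp hp1 y N)
      _ = N * Real.log lam := by rw [Real.log_pow]
      _ = Real.log lam * N := mul_comm _ _
  have hloglow : ∀ᶠ N : ℕ in atTop,
      Real.log lam + (Real.log c - Real.log N) / N ≤ Real.log (Zfree p y N) / N := by
    filter_upwards [eventually_gt_atTop 0] with N hN
    have hNpos : (0 : ℝ) < N := by exact_mod_cast hN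
    have h1 : Real.log (lam ^ N * c / N) ≤ Real.log (Zfree p y N) :=
      Real.log_le_log (by positivity) (hlow N hN)
    have h2 : Real.log (lam ^ N * c / N) = N * Real.log lam + Real.log c - Real.log N := by
      rw [Real.log_div (by positivity) (ne_of_gt hNpos),
        Real.log_mul (by positivity) (ne_of_gt hc0), Real.log_pow]
    have h3 : (N : ℝ) * Real.log lam + Real.log c - Real.log N ≤ Real.log (Zfree p y N) :=
      h2 ▸ h1
    calc Real.log lam + (Real.log c - Real.log N) / N
        = ((N : ℝ) * Real.log lam + Real.log c - Real.log N) / N := by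
          field_simp
          ring
      _ ≤ Real.log (Zfree p y N) / N := by gcongr
  have hlowtend : Tendsto
      (fun N : ℕ => Real.log lam + (Real.log c - Real.log N) / N) atTop
      (nhds (Real.log lam)) := by
    have h1 : Tendsto (fun N : ℕ => Real.log c / N) atTop (nhds 0) :=
      tendsto_const_div_atTop_nhds_zero_nat _
    have h2 : Tendsto (fun N : ℕ => Real.log N / N) atTop (nhds 0) := by
      have := (Real.isLittleO_log_id_atTop.tendsto_div_nhds_zero).comp
        (tendsto_natCast_atTop_atTop (R := ℝ))
      exact this
    have h3 := (h1.sub h2).const_add (Real.log lam)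
    simp only [sub_zero, add_zero, sub_self] at h3
    have h4 : (fun N : ℕ => Real.log lam + (Real.log c - Real.log N) / N)
        = fun N : ℕ => Real.log lam + (Real.log c / N - Real.log N / N) := by
      funext N
      rw [sub_div]
    rw [h4]
    exact h3
  exact tendsto_of_tendsto_of_tendsto_of_le_of_le' hlowtend tendsto_const_nhds hloglow hlogup


/-- `(1/N) log E[exp(y S_N); S_n ≠ 0, n = 1,…,N] → log(p cosh y + q)`. -/
theorem stmt_3 (p : ℝ) (hp : 0 < p) (hp1 : p ≤ 1) (y : ℝ) :
    Tendsto (fun N : ℕ => Real.log (Zfree p y N) / N) atTop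
      (nhds (Real.log (p * Real.cosh y + (1 - p)))) := by
  rcases le_total 0 y with hy | hy
  · exact main_nonneg p hp hp1 y hy
  · have h := main_nonneg p hp hp1 (-y) (by linarith)
    rw [Real.cosh_neg] at h
    simp_rw [Zfree_neg p y] at h
    exact h
end
end

section
/- Consider the homogeneous pinning model (\omega_n \equiv 1) for the simple random walk, i.e. the (p,q)-walk with p = 1, q = 0. Then \lim_{\beta\searrow 0} f_c(\beta) = 1 and \lim_{\beta \to \infty} \beta\,( f_c(\beta) - 1/2 ) = (\log 2)/2; equivalently, f_c(\beta) = 1/2 + (\log 2)/(2\beta) + o(1/\beta) as \beta \to \infty. -/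
open Filter Finset

noncomputable section
open scoped Classical

namespace S6

def sq (β : ℝ) : ℝ := Real.sqrt (2 * Real.exp β - 1)
def lam (β : ℝ) : ℝ := Real.exp β / sq β
def h (β : ℝ) (x : ℤ) : ℝ := if x = 0 then (Real.exp β)⁻¹ else (sq β)⁻¹ ^ x.natAbs

def R (N : ℕ) (ξ : Fin N → Fin 3) : ℝ :=
  ∑ n ∈ Finset.Icc 1 N, (if pos ξ n = 0 then (1:ℝ) else 0)

def A (β : ℝ) (N : ℕ) (φ : ℤ → ℝ) : ℝ :=
  ∑ ξ : Fin N → Fin 3, pwt 1 ξ * Real.exp (β * R N ξ) * φ (pos ξ N)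

variable {β : ℝ}

lemma hE (hβ : 0 ≤ β) : 1 ≤ Real.exp β := Real.one_le_exp hβ
lemma hs2 (hβ : 0 ≤ β) : sq β ^ 2 = 2 * Real.exp β - 1 :=
  Real.sq_sqrt (by nlinarith [hE hβ])
lemma hs1 (hβ : 0 ≤ β) : 1 ≤ sq β := by
  have h1 : (1:ℝ) ≤ 2 * Real.exp β - 1 := by nlinarith [hE hβ]
  have := Real.sqrt_le_sqrt h1
  simpa [sq] using this
lemma hspos (hβ : 0 ≤ β) : 0 < sq β := lt_of_lt_of_le one_pos (hs1 hβ)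
lemma hlam1 (hβ : 0 ≤ β) : 1 ≤ lam β := by
  rw [lam, le_div_iff₀ (hspos hβ), one_mul]
  nlinarith [hs2 hβ, hspos hβ, hE hβ]
lemma hlampos (hβ : 0 ≤ β) : 0 < lam β := lt_of_lt_of_le one_pos (hlam1 hβ)

lemma pow_helper (hβ : 0 ≤ β) (k : ℕ) :
    ((sq β)⁻¹ ^ k + (sq β)⁻¹ ^ (k+2)) / 2 = lam β * (sq β)⁻¹ ^ (k+1) := by
  have h2 := hs2 hβ
  have hne : sq β ≠ 0 := ne_of_gt (hspos hβ)
  have ht : sq β * (sq β)⁻¹ = 1 := mul_inv_cancel₀ hne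
  rw [lam]
  linear_combination ((sq β)⁻¹ ^ (k+2) / 2) * h2 + (-((sq β)⁻¹ ^ k) / 2 * (1 + sq β * (sq β)⁻¹)) * ht

lemma eigen (hβ : 0 ≤ β) (p : ℤ) :
    ((if p + -1 = 0 then Real.exp β else 1) * h β (p + -1)
     + (if p + 1 = 0 then Real.exp β else 1) * h β (p + 1)) / 2 = lam β * h β p := by
  have h2 := hs2 hβ
  have hsne : sq β ≠ 0 := ne_of_gt (hspos hβ)
  have hEne : Real.exp β ≠ 0 := Real.exp_ne_zero β
  by_cases h0 : p = 0
  · subst h0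
    simp only [h]
    norm_num
    rw [lam]
    field_simp
  · by_cases hp1 : p = 1
    · subst hp1
      simp only [h]
      norm_num
      rw [lam]
      field_simp
      nlinarith [h2]
    · by_cases hm1 : p = -1
      · subst hm1
        simp only [h]
        norm_num
        rw [lam]
        field_simp
        nlinarith [h2]
      · have hA : p + -1 ≠ 0 := by omega
        have hB : p + 1 ≠ 0 := by omega
        rw [if_neg hA, if_neg hB]
        simp only [h, if_neg hA, if_neg hB, if_neg h0]
        rcases lt_or_gt_of_ne h0 with hneg | hpos
        · obtain ⟨k, hk⟩ : ∃ k, (p+1).natAbs = k := ⟨_, rfl⟩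
          have e1 : p.natAbs = k + 1 := by omega
          have e2 : (p + -1).natAbs = k + 2 := by omega
          rw [hk, e1, e2, one_mul, one_mul]
          rw [add_comm ((sq β)⁻¹ ^ (k+2))]
          exact pow_helper hβ k
        · obtain ⟨k, hk⟩ : ∃ k, (p + -1).natAbs = k := ⟨_, rfl⟩
          have e1 : p.natAbs = k + 1 := by omega
          have e2 : (p + 1).natAbs = k + 2 := by omega
          rw [hk, e1, e2, one_mul, one_mul]
          exact pow_helper hβ k

lemma sum_snoc (N : ℕ) (f : (Fin (N+1) → Fin 3) → ℝ) :
    ∑ ξ : Fin (N+1) → Fin 3, f ξ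
      = ∑ ξ : Fin N → Fin 3, ∑ t : Fin 3, f (Fin.snoc ξ t) := by
  rw [← ((Fin.snocEquiv (fun _ => Fin 3)).sum_comp f)]
  rw [Fintype.sum_prod_type]
  rw [Finset.sum_comm]
  refine Finset.sum_congr rfl fun ξ _ => Finset.sum_congr rfl fun t _ => ?_
  congr 1

lemma pos_snoc_le {N : ℕ} (ξ : Fin N → Fin 3) (t : Fin 3) {n : ℕ} (hn : n ≤ N) :
    pos (Fin.snoc ξ t) n = pos ξ n := by
  unfold pos
  rw [Fin.sum_univ_castSucc]
  simp only [Fin.snoc_castSucc, Fin.snoc_last, Fin.coe_castSucc, Fin.val_last]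
  have : ¬ (N < n) := by omega
  simp [this]

lemma pos_snoc_top {N : ℕ} (ξ : Fin N → Fin 3) (t : Fin 3) :
    pos (Fin.snoc ξ t) (N+1) = pos ξ N + step t := by
  unfold pos
  rw [Fin.sum_univ_castSucc]
  simp only [Fin.snoc_castSucc, Fin.snoc_last, Fin.coe_castSucc, Fin.val_last]
  have h1 : (N : ℕ) < N + 1 := by omega
  rw [if_pos h1]
  congr 1
  refine Finset.sum_congr rfl fun i _ => ?_
  have h2 : (i : ℕ) < N := i.isLt
  have h3 : (i : ℕ) < N + 1 := by omega
  simp [h2, h3]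

lemma pwt_snoc {N : ℕ} (ξ : Fin N → Fin 3) (t : Fin 3) :
    pwt 1 (Fin.snoc ξ t) = pwt 1 ξ * wt 1 t := by
  unfold pwt
  rw [Fin.prod_univ_castSucc]
  simp

lemma R_snoc {N : ℕ} (ξ : Fin N → Fin 3) (t : Fin 3) :
    R (N+1) (Fin.snoc ξ t) = R N ξ + (if pos ξ N + step t = 0 then (1:ℝ) else 0) := by
  unfold R
  rw [Finset.sum_Icc_succ_top (by omega : 1 ≤ N + 1)]
  rw [pos_snoc_top]
  congr 1
  refine Finset.sum_congr rfl fun n hn => ?_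
  rw [Finset.mem_Icc] at hn
  rw [pos_snoc_le ξ t hn.2]

lemma pos_zero {N : ℕ} (ξ : Fin N → Fin 3) : pos ξ 0 = 0 := by
  unfold pos; simp

lemma A_zero (β : ℝ) (φ : ℤ → ℝ) : A β 0 φ = φ 0 := by
  unfold A R pwt
  simp [pos_zero]

lemma A_succ (β : ℝ) (N : ℕ) (φ : ℤ → ℝ) :
    A β (N+1) φ = ∑ ξ : Fin N → Fin 3, pwt 1 ξ * Real.exp (β * R N ξ) *
      (((if pos ξ N + -1 = 0 then Real.exp β else 1) * φ (pos ξ N + -1)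
       + (if pos ξ N + 1 = 0 then Real.exp β else 1) * φ (pos ξ N + 1)) / 2) := by
  unfold A
  rw [sum_snoc]
  refine Finset.sum_congr rfl fun ξ _ => ?_
  rw [Fin.sum_univ_three]
  simp only [pwt_snoc, R_snoc, pos_snoc_top]
  have hstep0 : step 0 = -1 := rfl
  have hstep1 : step 1 = 0 := rfl
  have hstep2 : step 2 = 1 := rfl
  have hwt0 : wt 1 0 = 1/2 := by norm_num [wt]
  have hwt1 : wt 1 1 = 0 := by norm_num [wt]
  have hwt2 : wt 1 2 = 1/2 := by simp [wt]
  rw [hstep0, hstep1, hstep2, hwt0, hwt1, hwt2]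
  have key : ∀ c : Prop, ∀ [Decidable c],
      Real.exp (β * (R N ξ + (if c then (1:ℝ) else 0)))
        = Real.exp (β * R N ξ) * (if c then Real.exp β else 1) := by
    intro c _
    split_ifs <;> simp [mul_add, Real.exp_add]
  rw [key, key, key]
  ring

lemma A_h (hβ : 0 ≤ β) (N : ℕ) : A β N (h β) = lam β ^ N * (Real.exp β)⁻¹ := by
  induction N with
  | zero => simp [A_zero, h]
  | succ N ih =>
    rw [A_succ]
    have : ∀ ξ : Fin N → Fin 3,
        pwt 1 ξ * Real.exp (β * R N ξ) *
          (((if pos ξ N + -1 = 0 then Real.exp β else 1) * h β (pos ξ N + -1)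
           + (if pos ξ N + 1 = 0 then Real.exp β else 1) * h β (pos ξ N + 1)) / 2)
        = lam β * (pwt 1 ξ * Real.exp (β * R N ξ) * h β (pos ξ N)) := by
      intro ξ
      rw [eigen hβ (pos ξ N)]
      ring
    rw [Finset.sum_congr rfl (fun ξ _ => this ξ), ← Finset.mul_sum]
    rw [show (∑ ξ : Fin N → Fin 3, pwt 1 ξ * Real.exp (β * R N ξ) * h β (pos ξ N)) = A β N (h β) from rfl]
    rw [ih]
    ring

lemma wt_nonneg (t : Fin 3) : 0 ≤ wt 1 t := by
  fin_cases t <;> norm_num [wt]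

lemma pwt_nonneg {N : ℕ} (ξ : Fin N → Fin 3) : 0 ≤ pwt 1 ξ :=
  Finset.prod_nonneg fun i _ => wt_nonneg (ξ i)

lemma term_nonneg {N : ℕ} (ξ : Fin N → Fin 3) :
    0 ≤ pwt 1 ξ * Real.exp (β * R N ξ) :=
  mul_nonneg (pwt_nonneg ξ) (Real.exp_pos _).le

lemma h_nonneg (hβ : 0 ≤ β) (x : ℤ) : 0 ≤ h β x := by
  unfold h
  split_ifs
  · exact inv_nonneg.mpr (Real.exp_pos β).le
  · exact pow_nonneg (inv_nonneg.mpr (hspos hβ).le) _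

lemma h_le_one (hβ : 0 ≤ β) (x : ℤ) : h β x ≤ 1 := by
  unfold h
  have h1 := hs1 hβ
  have hEβ := hE hβ
  split_ifs
  · rw [inv_le_one_iff₀]; right; exact hEβ
  · apply pow_le_one₀
    · exact inv_nonneg.mpr (hspos hβ).le
    · rw [inv_le_one_iff₀]; right; exact h1

lemma Z_eq (β : ℝ) (N : ℕ) : Z 1 (fun _ => 1) β 0 N = A β N (fun _ => 1) := by
  unfold Z A R
  simp

lemma A_one_lower (hβ : 0 ≤ β) (N : ℕ) :
    lam β ^ N * (Real.exp β)⁻¹ ≤ A β N (fun _ => 1) := by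
  rw [← A_h hβ]
  unfold A
  refine Finset.sum_le_sum fun ξ _ => ?_
  have := term_nonneg (β := β) ξ
  have h1 := h_le_one hβ (pos ξ N)
  show pwt 1 ξ * Real.exp (β * R N ξ) * h β (pos ξ N)
    ≤ pwt 1 ξ * Real.exp (β * R N ξ) * 1
  nlinarith

lemma bound_one (hβ : 0 ≤ β) (p : ℤ) :
    ((if p + -1 = 0 then Real.exp β else 1) + (if p + 1 = 0 then Real.exp β else 1)) / 2
      ≤ 1 + (Real.exp β - 1) * sq β * h β p := by
  have hEβ := hE hβ
  have hsp := hspos hβ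
  have hh := h_nonneg hβ p
  have hcancel : sq β * (sq β)⁻¹ = 1 := mul_inv_cancel₀ (ne_of_gt hsp)
  by_cases hp1 : p = 1
  · subst hp1
    have hval : h β 1 = (sq β)⁻¹ := by simp [h]
    rw [hval]
    norm_num
    nlinarith [hcancel, hEβ]
  · by_cases hm1 : p = -1
    · subst hm1
      have hval : h β (-1) = (sq β)⁻¹ := by simp [h]
      rw [hval]
      norm_num
      nlinarith [hcancel, hEβ]
    · have hA : p + -1 ≠ 0 := by omega
      have hB : p + 1 ≠ 0 := by omega
      rw [if_neg hA, if_neg hB]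
      nlinarith [mul_nonneg (mul_nonneg (sub_nonneg.mpr hEβ) hsp.le) hh]

lemma A_one_step (hβ : 0 ≤ β) (N : ℕ) :
    A β (N+1) (fun _ => 1)
      ≤ A β N (fun _ => 1) + (Real.exp β - 1) * sq β * (Real.exp β)⁻¹ * lam β ^ N := by
  rw [A_succ]
  have step1 : ∀ ξ : Fin N → Fin 3,
      pwt 1 ξ * Real.exp (β * R N ξ) *
        (((if pos ξ N + -1 = 0 then Real.exp β else 1) * (fun _ : ℤ => (1:ℝ)) (pos ξ N + -1)
         + (if pos ξ N + 1 = 0 then Real.exp β else 1) * (fun _ : ℤ => (1:ℝ)) (pos ξ N + 1)) / 2)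
      ≤ pwt 1 ξ * Real.exp (β * R N ξ) * (1 + (Real.exp β - 1) * sq β * h β (pos ξ N)) := by
    intro ξ
    have := bound_one hβ (pos ξ N)
    have h0 := term_nonneg (β := β) ξ
    simp only [mul_one]
    nlinarith
  have expand : ∀ ξ : Fin N → Fin 3,
      pwt 1 ξ * Real.exp (β * R N ξ) * (1 + (Real.exp β - 1) * sq β * h β (pos ξ N))
        = pwt 1 ξ * Real.exp (β * R N ξ) * ((fun _ : ℤ => (1:ℝ)) (pos ξ N))
          + (Real.exp β - 1) * sq β * (pwt 1 ξ * Real.exp (β * R N ξ) * h β (pos ξ N)) := by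
    intro ξ; ring
  calc ∑ ξ : Fin N → Fin 3, pwt 1 ξ * Real.exp (β * R N ξ) *
        (((if pos ξ N + -1 = 0 then Real.exp β else 1) * (fun _ : ℤ => (1:ℝ)) (pos ξ N + -1)
         + (if pos ξ N + 1 = 0 then Real.exp β else 1) * (fun _ : ℤ => (1:ℝ)) (pos ξ N + 1)) / 2)
      ≤ ∑ ξ : Fin N → Fin 3, pwt 1 ξ * Real.exp (β * R N ξ) *
          (1 + (Real.exp β - 1) * sq β * h β (pos ξ N)) :=
        Finset.sum_le_sum fun ξ _ => step1 ξ
    _ = A β N (fun _ => 1) + (Real.exp β - 1) * sq β * A β N (h β) := by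
        rw [Finset.sum_congr rfl (fun ξ _ => expand ξ), Finset.sum_add_distrib,
          ← Finset.mul_sum]
        rfl
    _ = A β N (fun _ => 1) + (Real.exp β - 1) * sq β * (Real.exp β)⁻¹ * lam β ^ N := by
        rw [A_h hβ]; ring


lemma Zn_pos (hβ : 0 ≤ β) (N : ℕ) : 0 < A β N (fun _ => 1) :=
  lt_of_lt_of_le
    (mul_pos (pow_pos (hlampos hβ) N) (inv_pos.mpr (Real.exp_pos β))) (A_one_lower hβ N)

lemma Zn_upper (hβ : 0 ≤ β) (N : ℕ) :
    A β N (fun _ => 1)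
      ≤ (1 + ((Real.exp β - 1) * sq β * (Real.exp β)⁻¹) * N) * lam β ^ N := by
  set C := (Real.exp β - 1) * sq β * (Real.exp β)⁻¹ with hC
  have hC0 : 0 ≤ C := by
    rw [hC]
    exact mul_nonneg (mul_nonneg (sub_nonneg.mpr (hE hβ)) (hspos hβ).le)
      (inv_nonneg.mpr (Real.exp_pos β).le)
  have hl1 := hlam1 hβ
  have hl0 := hlampos hβ
  induction N with
  | zero => simp [A_zero]
  | succ N ih =>
    have h1 := A_one_step hβ N
    have h2 : A β N (fun _ => 1) + C * lam β ^ N ≤ (1 + C * N) * lam β ^ N + C * lam β ^ N := by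
      nlinarith [ih]
    have h3 : (1 + C * N) * lam β ^ N + C * lam β ^ N = (1 + C * (N+1)) * lam β ^ N := by
      push_cast; ring
    have h4 : (1 + C * (N+1)) * lam β ^ N ≤ (1 + C * (N+1)) * lam β ^ (N+1) := by
      have hp : (0:ℝ) ≤ 1 + C * (N+1) := by
        have : (0:ℝ) ≤ C * (N+1) := mul_nonneg hC0 (by positivity)
        linarith
      have : lam β ^ N ≤ lam β ^ (N+1) := by
        apply pow_le_pow_right₀ hl1
        omega
      nlinarith
    calc A β (N+1) (fun _ => 1) ≤ A β N (fun _ => 1) + C * lam β ^ N := h1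
      _ ≤ (1 + C * N) * lam β ^ N + C * lam β ^ N := h2
      _ = (1 + C * (N+1)) * lam β ^ N := h3
      _ ≤ (1 + C * (N+1)) * lam β ^ (N+1) := h4
      _ = (1 + C * ((N:ℕ)+1 : ℕ)) * lam β ^ (N+1) := by push_cast; ring

lemma log_div_lim (C : ℝ) (hC : 0 ≤ C) :
    Tendsto (fun N : ℕ => Real.log (1 + C * N) / N) atTop (nhds 0) := by
  set D := C + 1 with hD
  have hD0 : (0:ℝ) < D := by linarith
  have htop : Tendsto (fun N : ℕ => (1 + D * N : ℝ)) atTop atTop := by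
    apply tendsto_atTop_add_const_left
    exact (tendsto_natCast_atTop_atTop).const_mul_atTop hD0
  have hlo : (fun N : ℕ => Real.log (1 + D * N)) =o[atTop] (fun N : ℕ => (1 + D * N : ℝ)) :=
    Real.isLittleO_log_id_atTop.comp_tendsto htop
  have hdiv : Tendsto (fun N : ℕ => Real.log (1 + D * N) / (1 + D * N)) atTop (nhds 0) :=
    hlo.tendsto_div_nhds_zero
  have hratio : Tendsto (fun N : ℕ => (1 + D * N) / (N : ℝ)) atTop (nhds D) := by
    have h1 : Tendsto (fun N : ℕ => 1 / (N : ℝ) + D) atTop (nhds (0 + D)) :=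
      (tendsto_const_div_atTop_nhds_zero_nat 1).add_const D
    rw [zero_add] at h1
    apply h1.congr'
    filter_upwards [eventually_gt_atTop 0] with N hN
    have : (N : ℝ) ≠ 0 := by positivity
    field_simp
  have hmul : Tendsto (fun N : ℕ =>
      (Real.log (1 + D * N) / (1 + D * N)) * ((1 + D * N) / (N : ℝ))) atTop (nhds (0 * D)) :=
    hdiv.mul hratio
  rw [zero_mul] at hmul
  have hDlim : Tendsto (fun N : ℕ => Real.log (1 + D * N) / N) atTop (nhds 0) := by
    apply hmul.congr'
    filter_upwards [eventually_gt_atTop 0] with N hN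
    have hne : (1 + D * (N:ℝ)) ≠ 0 := by positivity
    field_simp
  -- squeeze
  apply tendsto_of_tendsto_of_tendsto_of_le_of_le' tendsto_const_nhds hDlim
  · filter_upwards [eventually_gt_atTop 0] with N hN
    have h1 : (1:ℝ) ≤ 1 + C * N := by
      have : (0:ℝ) ≤ C * N := mul_nonneg hC (Nat.cast_nonneg N)
      linarith
    exact div_nonneg (Real.log_nonneg h1) (Nat.cast_nonneg N)
  · filter_upwards [eventually_gt_atTop 0] with N hN
    have hNpos : (0:ℝ) < N := by exact_mod_cast hN
    have h1 : (0:ℝ) < 1 + C * N := by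
      have : (0:ℝ) ≤ C * N := mul_nonneg hC (Nat.cast_nonneg N)
      linarith
    have h2 : (1:ℝ) + C * N ≤ 1 + D * N := by
      have : C * (N:ℝ) ≤ D * N := by nlinarith
      linarith
    have := Real.log_le_log h1 h2
    gcongr

lemma tendsto_logZ (hβ : 0 ≤ β) :
    Tendsto (fun N : ℕ => Real.log (Z 1 (fun _ => 1) β 0 N) / N) atTop
      (nhds (Real.log (lam β))) := by
  set C := (Real.exp β - 1) * sq β * (Real.exp β)⁻¹ with hC
  have hC0 : 0 ≤ C := by
    rw [hC]
    exact mul_nonneg (mul_nonneg (sub_nonneg.mpr (hE hβ)) (hspos hβ).le)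
      (inv_nonneg.mpr (Real.exp_pos β).le)
  have hl0 := hlampos hβ
  have hconst : Tendsto (fun _ : ℕ => Real.log (lam β)) atTop (nhds (Real.log (lam β))) :=
    tendsto_const_nhds
  have hlower : Tendsto (fun N : ℕ => Real.log (lam β) - β / N)
      atTop (nhds (Real.log (lam β))) := by
    have h1 := tendsto_const_div_atTop_nhds_zero_nat β
    have h2 := hconst.sub h1
    simpa using h2
  have hupper : Tendsto (fun N : ℕ => Real.log (lam β) + Real.log (1 + C * N) / N)
      atTop (nhds (Real.log (lam β))) := by
    have h2 := hconst.add (log_div_lim C hC0)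
    simpa using h2
  apply tendsto_of_tendsto_of_tendsto_of_le_of_le' hlower hupper
  · filter_upwards [eventually_gt_atTop 0] with N hN
    rw [Z_eq]
    have hNpos : (0:ℝ) < N := by exact_mod_cast hN
    have hlow := A_one_lower hβ N
    have hZpos : 0 < lam β ^ N * (Real.exp β)⁻¹ :=
      mul_pos (pow_pos hl0 N) (inv_pos.mpr (Real.exp_pos β))
    have hlog : Real.log (lam β ^ N * (Real.exp β)⁻¹) ≤ Real.log (A β N (fun _ => 1)) :=
      Real.log_le_log hZpos hlow
    rw [Real.log_mul (by positivity) (by positivity), Real.log_pow, Real.log_inv,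
      Real.log_exp] at hlog
    have heq : Real.log (lam β) - β / N
        = ((N : ℝ) * Real.log (lam β) + -β) / N := by
      field_simp
      ring
    rw [heq]
    gcongr
  · filter_upwards [eventually_gt_atTop 0] with N hN
    rw [Z_eq]
    have hNpos : (0:ℝ) < N := by exact_mod_cast hN
    have hup := Zn_upper hβ N
    have hZpos := Zn_pos hβ N
    have h1 : (0:ℝ) < 1 + C * N := by
      have : (0:ℝ) ≤ C * N := mul_nonneg hC0 (Nat.cast_nonneg N)
      linarith
    have hlog : Real.log (A β N (fun _ => 1)) ≤ Real.log ((1 + C * N) * lam β ^ N) :=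
      Real.log_le_log hZpos hup
    rw [Real.log_mul (by positivity) (by positivity), Real.log_pow] at hlog
    have heq : Real.log (lam β) + Real.log (1 + C * N) / N
        = (Real.log (1 + C * N) + (N : ℝ) * Real.log (lam β)) / N := by
      field_simp
      ring
    rw [heq]
    gcongr

lemma cosh_log_sq (hβ : 0 ≤ β) : Real.cosh (Real.log (sq β)) = lam β := by
  have hsp := hspos hβ
  have h2 := hs2 hβ
  rw [Real.cosh_eq, Real.exp_log hsp, Real.exp_neg, Real.exp_log hsp, lam]
  field_simp
  linear_combination h2

lemma g_log_sq (hβ : 0 ≤ β) : g 1 (Real.log (sq β)) = Real.log (lam β) := by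
  rw [g, cosh_log_sq hβ]
  norm_num

lemma log_sq_nonneg (hβ : 0 ≤ β) : 0 ≤ Real.log (sq β) :=
  Real.log_nonneg (hs1 hβ)

lemma log_sq_eq (hβ : 0 ≤ β) :
    Real.log (sq β) = Real.log (2 * Real.exp β - 1) / 2 := by
  rw [sq, Real.log_sqrt (by nlinarith [hE hβ])]

end S6

/-- for the homogeneous model on the simple random walk (`p = 1`),
`f_c(β) → 1` as `β ↘ 0` and `β (f_c(β) - 1/2) → (log 2)/2` as `β → ∞`. -/
theorem stmt_6
    (F : ℝ → ℝ)
    (hF : ∀ β : ℝ, 0 ≤ β →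
      Tendsto (fun N : ℕ => Real.log (Z 1 (fun _ => 1) β 0 N) / N) atTop (nhds (F β)))
    (ginv : ℝ → ℝ)
    (hginv_left : ∀ y : ℝ, 0 ≤ y → ginv (g 1 y) = y)
    (hginv_right : ∀ x : ℝ, 0 ≤ x → g 1 (ginv x) = x)
    (hginv_nonneg : ∀ x : ℝ, 0 ≤ x → 0 ≤ ginv x) :
    Tendsto (fun β : ℝ => ginv (F β) / β) (nhdsWithin 0 (Set.Ioi 0)) (nhds 1) ∧
    Tendsto (fun β : ℝ => β * (ginv (F β) / β - 1 / 2)) atTop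
      (nhds (Real.log 2 / 2)) := by
  have hFeq : ∀ β : ℝ, 0 ≤ β → F β = Real.log (S6.lam β) := fun β hβ =>
    tendsto_nhds_unique (hF β hβ) (S6.tendsto_logZ hβ)
  have hginvF : ∀ β : ℝ, 0 ≤ β → ginv (F β) = Real.log (2 * Real.exp β - 1) / 2 := by
    intro β hβ
    rw [hFeq β hβ, ← S6.g_log_sq hβ, hginv_left _ (S6.log_sq_nonneg hβ), S6.log_sq_eq hβ]
  constructor
  · -- β ↘ 0
    have hderiv : HasDerivAt (fun β : ℝ => Real.log (2 * Real.exp β - 1) / 2) 1 0 := by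
      have h1 : HasDerivAt Real.exp 1 0 := by
        simpa using Real.hasDerivAt_exp 0
      have h2 : HasDerivAt (fun β : ℝ => 2 * Real.exp β - 1) 2 0 := by
        simpa using (h1.const_mul 2).sub_const 1
      have h3 : HasDerivAt (fun β : ℝ => Real.log (2 * Real.exp β - 1)) 2 0 := by
        have h3' : HasDerivAt (fun β : ℝ => Real.log (2 * Real.exp β - 1))
            (2 / (2 * Real.exp 0 - 1)) 0 := h2.log (by norm_num)
        norm_num at h3'
        exact h3'
      simpa using h3.div_const 2
    rw [hasDerivAt_iff_tendsto_slope] at hderiv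
    have hmono : Tendsto (slope (fun β : ℝ => Real.log (2 * Real.exp β - 1) / 2) 0)
        (nhdsWithin 0 (Set.Ioi 0)) (nhds 1) :=
      hderiv.mono_left (nhdsWithin_mono 0 (fun x hx => ne_of_gt hx))
    apply hmono.congr'
    filter_upwards [self_mem_nhdsWithin] with β hβ
    have hβ0 : (0:ℝ) < β := hβ
    rw [slope_def_field]
    rw [hginvF β hβ0.le]
    norm_num [div_eq_div_iff]
  · -- β → ∞
    have hlim : Tendsto (fun β : ℝ => Real.log (2 - Real.exp (-β)) / 2) atTop
        (nhds (Real.log 2 / 2)) := by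
      have h1 : Tendsto (fun β : ℝ => 2 - Real.exp (-β)) atTop (nhds 2) := by
        have hc : Tendsto (fun _ : ℝ => (2:ℝ)) atTop (nhds 2) := tendsto_const_nhds
        have := hc.sub Real.tendsto_exp_neg_atTop_nhds_zero
        simpa using this
      have h2 : Tendsto (fun β : ℝ => Real.log (2 - Real.exp (-β))) atTop (nhds (Real.log 2)) :=
        ((Real.continuousAt_log (by norm_num)).tendsto.comp h1)
      exact h2.div_const 2
    apply hlim.congr'
    filter_upwards [eventually_ge_atTop (1:ℝ)] with β hβ
    have hβ0 : (0:ℝ) ≤ β := by linarith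
    have hβne : β ≠ 0 := by linarith
    have hu : (0:ℝ) < 2 * Real.exp β - 1 := by nlinarith [S6.hE hβ0]
    have key : Real.log (2 - Real.exp (-β)) = Real.log (2 * Real.exp β - 1) - β := by
      have hprod : 2 - Real.exp (-β) = (2 * Real.exp β - 1) * Real.exp (-β) := by
        rw [Real.exp_neg]
        field_simp
      rw [hprod, Real.log_mul (ne_of_gt hu) (Real.exp_ne_zero _), Real.log_exp]
      ring
    rw [key, hginvF β hβ0]
    field_simp
end
end

section
/- Consider the homogeneous pinning model (\omega_n \equiv 1) for the (p,q)-walk with 2/3 < p < 1. Then the critical force exhibits re-entrance: the function \beta \mapsto f_c(\beta) is not monotone on (0,\infty); more precisely, there exist 0 < \beta_1 < \beta_2 < \beta_3 such that f_c(\beta_1) > f_c(\beta_2) and f_c(\beta_2) < f_c(\beta_3). -/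
open Filter Finset

noncomputable section
open scoped Classical

namespace Stmt7


lemma wt_nonneg {p : ℝ} (hp0 : 0 ≤ p) (hp1 : p ≤ 1) (j : Fin 3) : 0 ≤ wt p j := by
  fin_cases j <;> simp [wt] <;> linarith

lemma sum_wt (p : ℝ) : ∑ j, wt p j = 1 := by
  simp [Fin.sum_univ_three, wt]; ring

lemma pwt_nonneg {p : ℝ} (hp0 : 0 ≤ p) (hp1 : p ≤ 1) {N : ℕ} (ξ : Fin N → Fin 3) :
    0 ≤ pwt p ξ :=
  Finset.prod_nonneg fun i _ => wt_nonneg hp0 hp1 _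

lemma pos_zero {N : ℕ} (ξ : Fin N → Fin 3) : pos ξ 0 = 0 := by simp [pos]

lemma pos_one_step {N : ℕ} (ξ : Fin N → Fin 3) (n : ℕ) (h : ξ = fun _ => 1) : pos ξ n = 0 := by
  subst h; simp [pos, step]

lemma pos_snoc_le {N : ℕ} (ξ : Fin N → Fin 3) (j : Fin 3) {n : ℕ} (hn : n ≤ N) :
    pos (Fin.snoc ξ j) n = pos ξ n := by
  unfold pos
  rw [Fin.sum_univ_castSucc]
  simp only [Fin.snoc_castSucc, Fin.coe_castSucc, Fin.snoc_last, Fin.val_last]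
  rw [if_neg (by omega), add_zero]

lemma pos_snoc_top {N : ℕ} (ξ : Fin N → Fin 3) (j : Fin 3) :
    pos (Fin.snoc ξ j) (N + 1) = pos ξ N + step j := by
  unfold pos
  rw [Fin.sum_univ_castSucc]
  simp only [Fin.snoc_castSucc, Fin.coe_castSucc, Fin.snoc_last, Fin.val_last]
  rw [if_pos (by omega)]
  congr 1
  apply Finset.sum_congr rfl
  intro i _
  rw [if_pos (by omega), if_pos (by omega)]

lemma pwt_snoc (p : ℝ) {N : ℕ} (ξ : Fin N → Fin 3) (j : Fin 3) :
    pwt p (Fin.snoc ξ j) = pwt p ξ * wt p j := by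
  unfold pwt
  rw [Fin.prod_univ_castSucc]
  simp [Fin.snoc_castSucc, Fin.snoc_last]

lemma pos_succ {N : ℕ} (ξ : Fin N → Fin 3) (i : Fin N) :
    pos ξ ((i : ℕ) + 1) = pos ξ (i : ℕ) + step (ξ i) := by
  unfold pos
  have : ∀ j : Fin N, (if (j : ℕ) < (i : ℕ) + 1 then step (ξ j) else 0)
      = (if (j : ℕ) < (i : ℕ) then step (ξ j) else 0) + (if j = i then step (ξ j) else 0) := by
    intro j
    by_cases h1 : (j : ℕ) < (i : ℕ)
    · rw [if_pos (by omega), if_pos h1, if_neg (by intro h; subst h; omega), add_zero]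
    · by_cases h2 : j = i
      · subst h2; rw [if_pos (by omega), if_neg h1, if_pos rfl, zero_add]
      · have : (j : ℕ) ≠ (i : ℕ) := fun h => h2 (Fin.val_injective h)
        rw [if_neg (by omega), if_neg h1, if_neg h2, add_zero]
  rw [Finset.sum_congr rfl fun j _ => this j, Finset.sum_add_distrib]
  congr 1
  rw [Finset.sum_eq_single i (fun b _ hb => if_neg hb) (by simp), if_pos rfl]



/-- number of nonzero steps is at most twice the number of nonzero positions. -/
lemma steps_le {N : ℕ} (ξ : Fin N → Fin 3) :
    (∑ i : Fin N, (if ξ i = 1 then (0:ℝ) else 1)) ≤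
      2 * ∑ n ∈ Finset.Icc 1 N, (if pos ξ n = 0 then (0:ℝ) else 1) := by
  set h : ℕ → ℝ := fun n => if pos ξ n = 0 then (0:ℝ) else 1 with hh
  have hnn : ∀ n, 0 ≤ h n := by intro n; simp only [hh]; positivity
  have key : ∀ i : Fin N, (if ξ i = 1 then (0:ℝ) else 1) ≤ h (i : ℕ) + h ((i : ℕ) + 1) := by
    intro i
    by_cases hi : ξ i = 1
    · rw [if_pos hi]; positivity
    · rw [if_neg hi]
      have hstep : step (ξ i) ≠ 0 := by
        have hd : ∀ j : Fin 3, j ≠ 1 → step j ≠ 0 := by decide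
        exact hd _ hi
      by_cases h0 : pos ξ (i : ℕ) = 0
      · have : pos ξ ((i : ℕ) + 1) ≠ 0 := by
          rw [pos_succ, h0, zero_add]; exact hstep
        simp only [hh, if_neg this, if_pos h0]; norm_num
      · have : (1:ℝ) ≤ h (i:ℕ) := by simp only [hh, if_neg h0]; norm_num
        have := hnn ((i:ℕ)+1); linarith
  calc (∑ i : Fin N, (if ξ i = 1 then (0:ℝ) else 1))
      ≤ ∑ i : Fin N, (h (i : ℕ) + h ((i : ℕ) + 1)) := Finset.sum_le_sum fun i _ => key i
    _ = (∑ i : Fin N, h (i:ℕ)) + ∑ i : Fin N, h ((i:ℕ) + 1) := Finset.sum_add_distrib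
    _ ≤ (∑ n ∈ Finset.Icc 1 N, h n) + ∑ n ∈ Finset.Icc 1 N, h n := by
        gcongr
        · -- ∑ i : Fin N, h i ≤ ∑ Icc 1 N
          rw [Fin.sum_univ_eq_sum_range]
          have e1 : ∑ n ∈ Finset.range N, h n = ∑ n ∈ Finset.Ico 1 N, h n := by
            rw [Finset.range_eq_Ico]
            refine (Finset.sum_subset (Finset.Ico_subset_Ico (by omega) le_rfl) ?_).symm
            intro x hx hx'
            simp only [Finset.mem_Ico] at hx hx'
            have : x = 0 := by omega
            subst this; simp [hh, pos_zero]
          rw [e1]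
          apply Finset.sum_le_sum_of_subset_of_nonneg
          · intro x hx; simp only [Finset.mem_Ico, Finset.mem_Icc] at *; omega
          · intro x _ _; exact hnn x
        · -- shifted sum equals Icc sum
          have : ∑ n ∈ Finset.Icc 1 N, h n = ∑ i ∈ Finset.range N, h (1 + i) := by
            rw [← Finset.Ico_add_one_right_eq_Icc, Finset.sum_Ico_eq_sum_range, Nat.add_sub_cancel]
          rw [this, Fin.sum_univ_eq_sum_range (fun k => h (k + 1)) N]
          apply le_of_eq
          exact Finset.sum_congr rfl fun i _ => by rw [add_comm]
    _ = 2 * ∑ n ∈ Finset.Icc 1 N, h n := by ring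

lemma L_le {N : ℕ} (ξ : Fin N → Fin 3) :
    (∑ n ∈ Finset.Icc 1 N, (if pos ξ n = 0 then (1:ℝ) else 0)) ≤
      (N : ℝ) - (1/2) * ∑ i : Fin N, (if ξ i = 1 then (0:ℝ) else 1) := by
  have hsplit : (∑ n ∈ Finset.Icc 1 N, (if pos ξ n = 0 then (1:ℝ) else 0))
      + ∑ n ∈ Finset.Icc 1 N, (if pos ξ n = 0 then (0:ℝ) else 1) = N := by
    rw [← Finset.sum_add_distrib]
    have : ∀ n ∈ Finset.Icc 1 N, ((if pos ξ n = 0 then (1:ℝ) else 0)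
        + if pos ξ n = 0 then (0:ℝ) else 1) = 1 := by
      intro n _; by_cases h : pos ξ n = 0 <;> simp [h]
    rw [Finset.sum_congr rfl this, Finset.sum_const, Nat.card_Icc]
    simp
  have := steps_le ξ
  linarith

lemma Z_le {p β : ℝ} (hp0 : 0 ≤ p) (hp1 : p ≤ 1) (hβ : 0 ≤ β) (N : ℕ) :
    Z p (fun _ => 1) β 0 N ≤ (Real.exp β * ((1 - p) + p * Real.exp (-(β/2)))) ^ N := by
  have key : ∀ ξ : Fin N → Fin 3,
      pwt p ξ * Real.exp (β * ∑ n ∈ Finset.Icc 1 N, (if pos ξ n = 0 then (1:ℝ) else 0)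
          + β * 0 * ((pos ξ N : ℤ) : ℝ))
        ≤ Real.exp β ^ N * ∏ i : Fin N, (wt p (ξ i) * Real.exp (-(β/2) * (if ξ i = 1 then (0:ℝ) else 1))) := by
    intro ξ
    have h1 : β * ∑ n ∈ Finset.Icc 1 N, (if pos ξ n = 0 then (1:ℝ) else 0)
          + β * 0 * ((pos ξ N : ℤ) : ℝ)
        ≤ β * N + ∑ i : Fin N, (-(β/2) * (if ξ i = 1 then (0:ℝ) else 1)) := by
      have hL := L_le ξ
      have : β * (∑ n ∈ Finset.Icc 1 N, (if pos ξ n = 0 then (1:ℝ) else 0))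
          ≤ β * ((N : ℝ) - (1/2) * ∑ i : Fin N, (if ξ i = 1 then (0:ℝ) else 1)) :=
        mul_le_mul_of_nonneg_left hL hβ
      rw [← Finset.mul_sum]
      rw [mul_zero, zero_mul, add_zero]
      nlinarith [this]
    calc pwt p ξ * Real.exp (β * ∑ n ∈ Finset.Icc 1 N, (if pos ξ n = 0 then (1:ℝ) else 0)
          + β * 0 * ((pos ξ N : ℤ) : ℝ))
        ≤ pwt p ξ * Real.exp (β * N + ∑ i : Fin N, (-(β/2) * (if ξ i = 1 then (0:ℝ) else 1))) := by
          apply mul_le_mul_of_nonneg_left (Real.exp_le_exp.2 h1) (pwt_nonneg hp0 hp1 ξ)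
      _ = Real.exp β ^ N * ∏ i : Fin N, (wt p (ξ i) * Real.exp (-(β/2) * (if ξ i = 1 then (0:ℝ) else 1))) := by
          have he : Real.exp (β * N + ∑ i : Fin N, (-(β/2) * (if ξ i = 1 then (0:ℝ) else 1)))
              = Real.exp β ^ N * ∏ i : Fin N, Real.exp (-(β/2) * (if ξ i = 1 then (0:ℝ) else 1)) := by
            rw [Real.exp_add, Real.exp_sum, mul_comm β (N:ℝ), Real.exp_nat_mul]
          rw [he]
          unfold pwt
          rw [Finset.prod_mul_distrib]
          ring
  calc Z p (fun _ => 1) β 0 N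
      ≤ ∑ ξ : Fin N → Fin 3, Real.exp β ^ N *
          ∏ i : Fin N, (wt p (ξ i) * Real.exp (-(β/2) * (if ξ i = 1 then (0:ℝ) else 1))) :=
        Finset.sum_le_sum fun ξ _ => key ξ
    _ = Real.exp β ^ N * ∑ ξ : Fin N → Fin 3,
          ∏ i : Fin N, (wt p (ξ i) * Real.exp (-(β/2) * (if ξ i = 1 then (0:ℝ) else 1))) := by
        rw [← Finset.mul_sum]
    _ = Real.exp β ^ N * ((1 - p) + p * Real.exp (-(β/2))) ^ N := by
        congr 1
        rw [← Fintype.prod_sum (fun (_ : Fin N) (j : Fin 3) =>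
          wt p j * Real.exp (-(β/2) * (if j = 1 then (0:ℝ) else 1)))]
        have hval : (∑ j : Fin 3, wt p j * Real.exp (-(β/2) * (if j = 1 then (0:ℝ) else 1)))
            = (1 - p) + p * Real.exp (-(β/2)) := by
          rw [Fin.sum_univ_three, if_neg (show ¬(0:Fin 3) = 1 by decide), if_pos rfl,
            if_neg (show ¬(2:Fin 3) = 1 by decide)]
          simp only [wt, Matrix.cons_val_zero, Matrix.cons_val_one, Matrix.head_cons,
            Matrix.cons_val_two, Matrix.tail_cons, mul_one, mul_zero, Real.exp_zero]
          ring
        rw [Finset.prod_const, hval, Finset.card_univ, Fintype.card_fin]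
    _ = (Real.exp β * ((1 - p) + p * Real.exp (-(β/2)))) ^ N := by rw [mul_pow]



/-- Lower bound: the all-lazy path. -/
lemma Z_ge_lazy {p β : ℝ} (hp0 : 0 ≤ p) (hp1 : p ≤ 1) (N : ℕ) :
    ((1 - p) * Real.exp β) ^ N ≤ Z p (fun _ => 1) β 0 N := by
  have hterm : ∀ ξ : Fin N → Fin 3, (0:ℝ) ≤
      pwt p ξ * Real.exp (β * ∑ n ∈ Finset.Icc 1 N, (if pos ξ n = 0 then (1:ℝ) else 0)
        + β * 0 * ((pos ξ N : ℤ) : ℝ)) := by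
    intro ξ; exact mul_nonneg (pwt_nonneg hp0 hp1 ξ) (Real.exp_nonneg _)
  have h1 : Z p (fun _ => 1) β 0 N ≥
      pwt p (fun _ => (1 : Fin 3)) *
        Real.exp (β * ∑ n ∈ Finset.Icc 1 N, (if pos (fun _ => (1:Fin 3)) n = 0 then (1:ℝ) else 0)
          + β * 0 * ((pos (fun _ => (1:Fin 3)) N : ℤ) : ℝ)) :=
    Finset.single_le_sum (fun ξ _ => hterm ξ) (Finset.mem_univ _)
  have hpos : ∀ n : ℕ, pos (fun _ : Fin N => (1:Fin 3)) n = 0 := by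
    intro n; unfold pos; simp [step]
  have hpwt : pwt p (fun _ : Fin N => (1:Fin 3)) = (1 - p) ^ N := by
    unfold pwt
    rw [Finset.prod_const, Finset.card_univ, Fintype.card_fin]
    rfl
  rw [hpwt] at h1
  have hsum : (∑ n ∈ Finset.Icc 1 N, (if pos (fun _ : Fin N => (1:Fin 3)) n = 0 then (1:ℝ) else 0))
      = N := by
    rw [Finset.sum_congr rfl fun n _ => if_pos (hpos n), Finset.sum_const, Nat.card_Icc]
    simp
  rw [hsum] at h1
  calc ((1 - p) * Real.exp β) ^ N = (1 - p) ^ N * Real.exp (β * N + β * 0 * ((pos (fun _ : Fin N => (1:Fin 3)) N : ℤ) : ℝ)) := by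
        rw [mul_pow, mul_zero, zero_mul, add_zero, mul_comm β (N:ℝ), Real.exp_nat_mul]
    _ ≤ Z p (fun _ => 1) β 0 N := h1

/-- the sub-eigenvector -/
def vfun (β : ℝ) (x : ℤ) : ℝ := Real.exp (-β * ((max |x| 1 : ℤ) : ℝ))

lemma vfun_pos (β : ℝ) (x : ℤ) : 0 < vfun β x := Real.exp_pos _

lemma vfun_le (β : ℝ) (hβ : 0 ≤ β) (x : ℤ) : vfun β x ≤ Real.exp (-β) := by
  unfold vfun
  rw [Real.exp_le_exp]
  have h1 : (1:ℤ) ≤ max |x| 1 := le_max_right _ _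
  have : (1:ℝ) ≤ ((max |x| 1 : ℤ) : ℝ) := by exact_mod_cast h1
  nlinarith

/-- The pointwise sub-eigenvector inequality. -/
lemma eigen_step {p β : ℝ} (hp0 : 0 < p) (hp1 : p < 1) (hβ : 0 ≤ β)
    (hcond : p * (Real.cosh β - 1) ≤ (1 - p) * (Real.exp β - 1)) (x : ℤ) :
    (p * Real.cosh β + (1 - p)) * vfun β x ≤
      ∑ j : Fin 3, wt p j * (Real.exp (β * (if x + step j = 0 then (1:ℝ) else 0)) * vfun β (x + step j)) := by
  have ha : Real.exp β * Real.exp (-β) = 1 := by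
    rw [← Real.exp_add]; simp
  have hcosh : Real.cosh β = (Real.exp β + Real.exp (-β)) / 2 := Real.cosh_eq β
  have hea : 1 ≤ Real.exp β := Real.one_le_exp hβ
  have heb : Real.exp (-β) ≤ 1 := Real.exp_le_one_iff.mpr (by linarith)
  have hebpos : 0 < Real.exp (-β) := Real.exp_pos _
  rw [Fin.sum_univ_three]
  show (p * Real.cosh β + (1 - p)) * vfun β x ≤
      wt p 0 * (Real.exp (β * (if x + step 0 = 0 then (1:ℝ) else 0)) * vfun β (x + step 0))
      + wt p 1 * (Real.exp (β * (if x + step 1 = 0 then (1:ℝ) else 0)) * vfun β (x + step 1))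
      + wt p 2 * (Real.exp (β * (if x + step 2 = 0 then (1:ℝ) else 0)) * vfun β (x + step 2))
  have hs0 : step 0 = -1 := rfl
  have hs1 : step 1 = 0 := rfl
  have hs2 : step 2 = 1 := rfl
  have hw0 : wt p 0 = p / 2 := rfl
  have hw1 : wt p 1 = 1 - p := rfl
  have hw2 : wt p 2 = p / 2 := rfl
  rw [hs0, hs1, hs2, hw0, hw1, hw2, add_zero]
  -- case analysis on x
  rcases lt_trichotomy x 0 with hx | hx | hx
  · -- x < 0
    rcases eq_or_lt_of_le (show x ≤ -1 by omega) with hx1 | hx2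
    · -- x = -1
      subst hx1
      norm_num
      have v0 : vfun β (-2) = Real.exp (-β) * Real.exp (-β) := by
        unfold vfun; norm_num; rw [← Real.exp_add]; ring_nf
      have v1 : vfun β (-1) = Real.exp (-β) := by unfold vfun; norm_num
      have v2 : vfun β 0 = Real.exp (-β) := by unfold vfun; norm_num
      rw [v0, v1, v2, hcosh]
      nlinarith [ha]
    · -- x ≤ -2
      rw [if_neg (show ¬x + -1 = 0 by omega), if_neg (show ¬x = 0 by omega),
        if_neg (show ¬x + 1 = 0 by omega)]
      norm_num
      have v0 : vfun β (x + -1) = vfun β x * Real.exp (-β) := by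
        unfold vfun
        rw [← Real.exp_add]
        congr 1
        have e1 : max |x + -1| 1 = -(x + -1) := by
          rw [abs_of_nonpos (by omega)]; exact max_eq_left (by omega)
        have e2 : max |x| 1 = -x := by
          rw [abs_of_nonpos (by omega)]; exact max_eq_left (by omega)
        rw [e1, e2]
        push_cast
        ring
      have v2 : vfun β (x + 1) = vfun β x * Real.exp β := by
        unfold vfun
        rw [← Real.exp_add]
        congr 1
        have e1 : max |x + 1| 1 = -(x + 1) := by
          rw [abs_of_nonpos (by omega)]; exact max_eq_left (by omega)
        have e2 : max |x| 1 = -x := by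
          rw [abs_of_nonpos (by omega)]; exact max_eq_left (by omega)
        rw [e1, e2]
        push_cast
        ring
      rw [v0, v2, hcosh]
      have hv := vfun_pos β x
      nlinarith [hv]
  · -- x = 0
    subst hx
    norm_num
    have v1 : vfun β (-1) = Real.exp (-β) := by unfold vfun; norm_num
    have v2 : vfun β 1 = Real.exp (-β) := by unfold vfun; norm_num
    have v0 : vfun β 0 = Real.exp (-β) := by unfold vfun; norm_num
    rw [v1, v2, v0, hcosh]
    have hmul : p * (Real.cosh β - 1) * Real.exp (-β) ≤ (1 - p) * (Real.exp β - 1) * Real.exp (-β) :=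
      mul_le_mul_of_nonneg_right hcond hebpos.le
    rw [hcosh] at hmul
    nlinarith [ha, hmul]
  · -- x > 0
    rcases eq_or_lt_of_le (show (1:ℤ) ≤ x by omega) with hx1 | hx2
    · subst hx1
      norm_num
      have v0 : vfun β 0 = Real.exp (-β) := by unfold vfun; norm_num
      have v1 : vfun β 1 = Real.exp (-β) := by unfold vfun; norm_num
      have v2 : vfun β 2 = Real.exp (-β) * Real.exp (-β) := by
        unfold vfun; norm_num; rw [← Real.exp_add]; ring_nf
      rw [v0, v1, v2, hcosh]
      nlinarith [ha]
    · -- x ≥ 2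
      rw [if_neg (show ¬x + -1 = 0 by omega), if_neg (show ¬x = 0 by omega),
        if_neg (show ¬x + 1 = 0 by omega)]
      norm_num
      have v0 : vfun β (x + -1) = vfun β x * Real.exp β := by
        unfold vfun
        rw [← Real.exp_add]
        congr 1
        have e1 : max |x + -1| 1 = x + -1 := by
          rw [abs_of_nonneg (by omega)]; exact max_eq_left (by omega)
        have e2 : max |x| 1 = x := by
          rw [abs_of_nonneg (by omega)]; exact max_eq_left (by omega)
        rw [e1, e2]
        push_cast
        ring
      have v2 : vfun β (x + 1) = vfun β x * Real.exp (-β) := by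
        unfold vfun
        rw [← Real.exp_add]
        congr 1
        have e1 : max |x + 1| 1 = x + 1 := by
          rw [abs_of_nonneg (by omega)]; exact max_eq_left (by omega)
        have e2 : max |x| 1 = x := by
          rw [abs_of_nonneg (by omega)]; exact max_eq_left (by omega)
        rw [e1, e2]
        push_cast
        ring
      rw [v0, v2, hcosh]
      have hv := vfun_pos β x
      nlinarith [hv]


def Lr {N : ℕ} (ξ : Fin N → Fin 3) : ℝ :=
  ∑ n ∈ Finset.Icc 1 N, (if pos ξ n = 0 then (1:ℝ) else 0)

def Wv (p β : ℝ) (N : ℕ) : ℝ :=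
  ∑ ξ : Fin N → Fin 3, pwt p ξ * (Real.exp (β * Lr ξ) * vfun β (pos ξ N))

lemma Lr_snoc {N : ℕ} (ξ : Fin N → Fin 3) (j : Fin 3) :
    Lr (Fin.snoc ξ j) = Lr ξ + (if pos ξ N + step j = 0 then (1:ℝ) else 0) := by
  unfold Lr
  rw [← Finset.Ico_add_one_right_eq_Icc, Finset.sum_Ico_succ_top (by omega), Finset.Ico_add_one_right_eq_Icc]
  congr 1
  · exact Finset.sum_congr rfl fun n hn => by
      rw [pos_snoc_le ξ j (Finset.mem_Icc.mp hn).2]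
  · rw [pos_snoc_top]

lemma Wv_zero (p β : ℝ) : Wv p β 0 = Real.exp (-β) := by
  unfold Wv
  rw [Fintype.sum_unique]
  unfold pwt Lr vfun
  simp [pos]

lemma Wv_succ {p β : ℝ} (hp0 : 0 < p) (hp1 : p < 1) (hβ : 0 ≤ β)
    (hcond : p * (Real.cosh β - 1) ≤ (1 - p) * (Real.exp β - 1)) (N : ℕ) :
    (p * Real.cosh β + (1 - p)) * Wv p β N ≤ Wv p β (N + 1) := by
  have hre : Wv p β (N + 1) = ∑ y : Fin 3 × (Fin N → Fin 3),
      pwt p (Fin.snoc y.2 y.1 : Fin (N+1) → Fin 3) * (Real.exp (β * Lr (Fin.snoc y.2 y.1))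
        * vfun β (pos (Fin.snoc y.2 y.1) (N + 1))) := by
    unfold Wv
    rw [← Equiv.sum_comp (Fin.snocEquiv (fun _ => Fin 3))]
    apply Finset.sum_congr rfl
    intro y _
    rfl
  rw [hre, Fintype.sum_prod_type_right]
  unfold Wv
  rw [Finset.mul_sum]
  apply Finset.sum_le_sum
  intro ξ _
  have hterm : ∀ j : Fin 3, pwt p (Fin.snoc ξ j : Fin (N+1) → Fin 3) *
      (Real.exp (β * Lr (Fin.snoc ξ j)) * vfun β (pos (Fin.snoc ξ j) (N + 1)))
      = pwt p ξ * Real.exp (β * Lr ξ) *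
        (wt p j * (Real.exp (β * (if pos ξ N + step j = 0 then (1:ℝ) else 0))
          * vfun β (pos ξ N + step j))) := by
    intro j
    rw [pwt_snoc, Lr_snoc, pos_snoc_top, mul_add, Real.exp_add]
    ring
  rw [Finset.sum_congr rfl fun j _ => hterm j, ← Finset.mul_sum]
  have h1 := eigen_step hp0 hp1 hβ hcond (pos ξ N)
  have h2 : 0 ≤ pwt p ξ * Real.exp (β * Lr ξ) :=
    mul_nonneg (pwt_nonneg hp0.le hp1.le ξ) (Real.exp_nonneg _)
  calc (p * Real.cosh β + (1 - p)) * (pwt p ξ * (Real.exp (β * Lr ξ) * vfun β (pos ξ N)))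
      = (pwt p ξ * Real.exp (β * Lr ξ)) * ((p * Real.cosh β + (1 - p)) * vfun β (pos ξ N)) := by
        ring
    _ ≤ (pwt p ξ * Real.exp (β * Lr ξ)) * ∑ j : Fin 3, wt p j *
          (Real.exp (β * (if pos ξ N + step j = 0 then (1:ℝ) else 0)) * vfun β (pos ξ N + step j)) :=
        mul_le_mul_of_nonneg_left h1 h2

lemma Wv_ge {p β : ℝ} (hp0 : 0 < p) (hp1 : p < 1) (hβ : 0 ≤ β)
    (hcond : p * (Real.cosh β - 1) ≤ (1 - p) * (Real.exp β - 1)) (N : ℕ) :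
    (p * Real.cosh β + (1 - p)) ^ N * Real.exp (-β) ≤ Wv p β N := by
  induction N with
  | zero => simp [Wv_zero]
  | succ N ih =>
    have hμ : (0:ℝ) ≤ p * Real.cosh β + (1 - p) := by
      have := Real.one_le_cosh β
      nlinarith
    calc (p * Real.cosh β + (1 - p)) ^ (N+1) * Real.exp (-β)
        = (p * Real.cosh β + (1 - p)) * ((p * Real.cosh β + (1 - p)) ^ N * Real.exp (-β)) := by
          ring
      _ ≤ (p * Real.cosh β + (1 - p)) * Wv p β N := by
          exact mul_le_mul_of_nonneg_left ih hμ
      _ ≤ Wv p β (N + 1) := Wv_succ hp0 hp1 hβ hcond N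

/-- Eigenvector lower bound on `Z`. -/
lemma Z_ge_eigen {p β : ℝ} (hp0 : 0 < p) (hp1 : p < 1) (hβ : 0 ≤ β)
    (hcond : p * (Real.cosh β - 1) ≤ (1 - p) * (Real.exp β - 1)) (N : ℕ) :
    (p * Real.cosh β + (1 - p)) ^ N ≤ Z p (fun _ => 1) β 0 N := by
  have key : ∀ ξ : Fin N → Fin 3,
      pwt p ξ * (Real.exp (β * Lr ξ) * vfun β (pos ξ N)) * Real.exp β ≤
      pwt p ξ * Real.exp (β * ∑ n ∈ Finset.Icc 1 N, (if pos ξ n = 0 then (1:ℝ) else 0)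
        + β * 0 * ((pos ξ N : ℤ) : ℝ)) := by
    intro ξ
    rw [mul_zero, zero_mul, add_zero]
    have hv : vfun β (pos ξ N) * Real.exp β ≤ 1 := by
      have := vfun_le β hβ (pos ξ N)
      calc vfun β (pos ξ N) * Real.exp β ≤ Real.exp (-β) * Real.exp β :=
            mul_le_mul_of_nonneg_right this (Real.exp_nonneg _)
        _ = 1 := by rw [← Real.exp_add]; simp
    have h2 : 0 ≤ pwt p ξ * Real.exp (β * Lr ξ) :=
      mul_nonneg (pwt_nonneg hp0.le hp1.le ξ) (Real.exp_nonneg _)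
    calc pwt p ξ * (Real.exp (β * Lr ξ) * vfun β (pos ξ N)) * Real.exp β
        = (pwt p ξ * Real.exp (β * Lr ξ)) * (vfun β (pos ξ N) * Real.exp β) := by ring
      _ ≤ (pwt p ξ * Real.exp (β * Lr ξ)) * 1 := mul_le_mul_of_nonneg_left hv h2
      _ = pwt p ξ * Real.exp (β * Lr ξ) := by ring
  have hW := Wv_ge hp0 hp1 hβ hcond N
  have hsum : Wv p β N * Real.exp β ≤ Z p (fun _ => 1) β 0 N := by
    unfold Wv Z
    rw [Finset.sum_mul]
    exact Finset.sum_le_sum fun ξ _ => key ξ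
  have hμ : (0:ℝ) ≤ (p * Real.cosh β + (1 - p)) ^ N := by
    have h := Real.one_le_cosh β
    have : (0:ℝ) ≤ p * Real.cosh β + (1 - p) := by nlinarith
    positivity
  calc (p * Real.cosh β + (1 - p)) ^ N
      = ((p * Real.cosh β + (1 - p)) ^ N * Real.exp (-β)) * Real.exp β := by
        rw [mul_assoc, ← Real.exp_add]; simp
    _ ≤ Wv p β N * Real.exp β :=
        mul_le_mul_of_nonneg_right hW (Real.exp_nonneg _)
    _ ≤ Z p (fun _ => 1) β 0 N := hsum

end Stmt7

open Stmt7

/-- for the homogeneous model with `2/3 < p < 1`, the critical force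
`f_c(β) = (1/β) g⁻¹(F(β))` is re-entrant: there are `0 < β₁ < β₂ < β₃` with
`f_c(β₁) > f_c(β₂)` and `f_c(β₂) < f_c(β₃)`. -/
theorem stmt_7 (p : ℝ) (hp : 2 / 3 < p) (hp1 : p < 1)
    (F : ℝ → ℝ)
    (hF : ∀ β : ℝ, 0 ≤ β →
      Tendsto (fun N : ℕ => Real.log (Z p (fun _ => 1) β 0 N) / N) atTop (nhds (F β)))
    (ginv : ℝ → ℝ)
    (hginv_left : ∀ y : ℝ, 0 ≤ y → ginv (g p y) = y)
    (hginv_right : ∀ x : ℝ, 0 ≤ x → g p (ginv x) = x)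
    (hginv_nonneg : ∀ x : ℝ, 0 ≤ x → 0 ≤ ginv x) :
    ∃ β₁ β₂ β₃ : ℝ, 0 < β₁ ∧ β₁ < β₂ ∧ β₂ < β₃ ∧
      ginv (F β₂) / β₂ < ginv (F β₁) / β₁ ∧
      ginv (F β₂) / β₂ < ginv (F β₃) / β₃ := by
  have hp0 : (0:ℝ) < p := by linarith
  have hq0 : (0:ℝ) < 1 - p := by linarith
  -- limit transfer lemmas
  have Fge : ∀ β c : ℝ, 0 ≤ β → 0 < c →
      (∀ N : ℕ, c ^ N ≤ Z p (fun _ => 1) β 0 N) → Real.log c ≤ F β := by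
    intro β c hβ hc hZ
    refine ge_of_tendsto (hF β hβ) ?_
    filter_upwards [eventually_gt_atTop 0] with N hN
    have hlog : (N:ℝ) * Real.log c ≤ Real.log (Z p (fun _ => 1) β 0 N) := by
      rw [← Real.log_pow]
      exact Real.log_le_log (pow_pos hc N) (hZ N)
    have hNpos : (0:ℝ) < (N:ℝ) := by exact_mod_cast hN
    rw [le_div_iff₀ hNpos]
    linarith
  have Fle : ∀ β C : ℝ, 0 ≤ β → 0 < C →
      (∀ N : ℕ, Z p (fun _ => 1) β 0 N ≤ C ^ N) → F β ≤ Real.log C := by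
    intro β C hβ hC hZ
    refine le_of_tendsto (hF β hβ) ?_
    filter_upwards [eventually_gt_atTop 0] with N hN
    have hZpos : (0:ℝ) < Z p (fun _ => 1) β 0 N :=
      lt_of_lt_of_le (pow_pos (by positivity : (0:ℝ) < (1 - p) * Real.exp β) N)
        (Z_ge_lazy hp0.le hp1.le (β := β) N)
    have hlog : Real.log (Z p (fun _ => 1) β 0 N) ≤ (N:ℝ) * Real.log C := by
      rw [← Real.log_pow]
      exact Real.log_le_log hZpos (hZ N)
    have hNpos : (0:ℝ) < (N:ℝ) := by exact_mod_cast hN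
    rw [div_le_iff₀ hNpos]
    linarith
  -- basic g bounds
  have hμpos : ∀ y : ℝ, 0 < p * Real.cosh y + (1 - p) := by
    intro y
    have := Real.one_le_cosh y
    nlinarith
  have g_le_self : ∀ y : ℝ, 0 ≤ y → g p y ≤ y := by
    intro y hy
    unfold g
    rw [Real.log_le_iff_le_exp (hμpos y)]
    have h1 : Real.exp (-y) ≤ 1 := Real.exp_le_one_iff.mpr (by linarith)
    have h2 : 1 ≤ Real.exp y := Real.one_le_exp hy
    rw [Real.cosh_eq]
    nlinarith
  have g_ge : ∀ y : ℝ, y + Real.log (p/2) ≤ g p y := by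
    intro y
    unfold g
    have h1 : (p/2) * Real.exp y ≤ p * Real.cosh y + (1 - p) := by
      rw [Real.cosh_eq]
      have := Real.exp_pos (-y)
      nlinarith
    calc y + Real.log (p/2) = Real.log ((p/2) * Real.exp y) := by
          rw [Real.log_mul (by positivity) (Real.exp_ne_zero y), Real.log_exp]; ring
      _ ≤ Real.log (p * Real.cosh y + (1 - p)) := Real.log_le_log (by positivity) h1
  have g_mono : ∀ a b : ℝ, 0 ≤ a → a < b → g p a < g p b := by
    intro a b ha hab
    unfold g
    apply Real.log_lt_log (hμpos a)
    have : Real.cosh a < Real.cosh b := by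
      rw [Real.cosh_lt_cosh, abs_of_nonneg ha, abs_of_nonneg (by linarith)]
      exact hab
    nlinarith
  have ginv_ge_self : ∀ x : ℝ, 0 ≤ x → x ≤ ginv x := by
    intro x hx
    have h := hginv_right x hx
    have := g_le_self (ginv x) (hginv_nonneg x hx)
    linarith
  have ginv_le : ∀ x : ℝ, 0 ≤ x → ginv x ≤ x - Real.log (p/2) := by
    intro x hx
    have h := hginv_right x hx
    have := g_ge (ginv x)
    linarith
  -- the three betas
  set β₁ : ℝ := Real.log (p / (3*p - 2)) with hβ₁def
  have h3p2 : (0:ℝ) < 3*p - 2 := by linarith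
  have hβ₁pos : 0 < β₁ := Real.log_pos (by rw [lt_div_iff₀ h3p2]; linarith)
  have hexpβ₁ : Real.exp β₁ = p / (3*p - 2) := Real.exp_log (by positivity)
  have hcond₁ : p * (Real.cosh β₁ - 1) ≤ (1 - p) * (Real.exp β₁ - 1) := by
    have hexpn : Real.exp (-β₁) = (3*p - 2) / p := by
      rw [Real.exp_neg, hexpβ₁, inv_div]
    rw [Real.cosh_eq, hexpβ₁, hexpn]
    apply le_of_eq
    have ha : (3*p - 2) ≠ 0 := h3p2.ne'
    have hpne : p ≠ 0 := hp0.ne'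
    linear_combination (3*p-2)/2 * mul_inv_cancel₀ hpne + p/2 * mul_inv_cancel₀ ha
  have hFβ₁ : g p β₁ ≤ F β₁ :=
    Fge β₁ (p * Real.cosh β₁ + (1 - p)) hβ₁pos.le (hμpos β₁)
      (fun N => Z_ge_eigen hp0 hp1 hβ₁pos.le hcond₁ N)
  have hgβ₁0 : 0 ≤ g p β₁ := by
    unfold g
    apply Real.log_nonneg
    have := Real.one_le_cosh β₁
    nlinarith
  have hFβ₁0 : 0 ≤ F β₁ := le_trans hgβ₁0 hFβ₁
  have fc₁ : 1 ≤ ginv (F β₁) / β₁ := by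
    rw [le_div_iff₀ hβ₁pos, one_mul]
    by_contra hlt
    push_neg at hlt
    have h1 : g p (ginv (F β₁)) < g p β₁ := g_mono _ _ (hginv_nonneg _ hFβ₁0) hlt
    rw [hginv_right _ hFβ₁0] at h1
    linarith
  -- D and L
  set D : ℝ := Real.log (p / (2*(1 - p))) with hDdef
  have hD : 0 < D := Real.log_pos (by rw [lt_div_iff₀ (by linarith)]; linarith)
  set L : ℝ := Real.log (1/(1-p)) with hLdef
  have hlogq : L = -Real.log (1 - p) := by rw [hLdef, one_div, Real.log_inv]
  have hL : 0 < L := Real.log_pos (by rw [lt_div_iff₀ hq0]; linarith)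
  have hDeq : D = Real.log (p/2) - Real.log (1-p) := by
    rw [hDdef, ← div_div p 2 (1-p), Real.log_div (by positivity) (by positivity)]
  -- β₂
  set β₂ : ℝ := max (β₁ + 1) (max (L + 1) (2 * Real.log (2*p/((1-p)*D)) + 1)) with hβ₂def
  have hβ₂1 : β₁ < β₂ := lt_of_lt_of_le (by linarith) (le_max_left _ _)
  have hβ₂pos : 0 < β₂ := hβ₁pos.trans hβ₂1
  have hβ₂q : L + 1 ≤ β₂ := le_trans (le_max_left _ _) (le_max_right _ _)
  have hβ₂D : 2 * Real.log (2*p/((1-p)*D)) + 1 ≤ β₂ := le_trans (le_max_right _ _) (le_max_right _ _)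
  have hc0 : (0:ℝ) < 2*p/((1-p)*D) := by positivity
  have hexp2 : (p/(1-p)) * Real.exp (-(β₂/2)) ≤ D/2 := by
    have h1 : Real.log (2*p/((1-p)*D)) ≤ β₂/2 := by linarith
    have h3 : 2*p/((1-p)*D) ≤ Real.exp (β₂/2) := (Real.log_le_iff_le_exp hc0).mp h1
    have h2 : Real.exp (-(β₂/2)) ≤ ((1-p)*D)/(2*p) := by
      rw [Real.exp_neg]
      calc (Real.exp (β₂/2))⁻¹ ≤ (2*p/((1-p)*D))⁻¹ := by
            apply inv_anti₀ hc0 h3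
        _ = ((1-p)*D)/(2*p) := by rw [inv_div]
    calc (p/(1-p)) * Real.exp (-(β₂/2)) ≤ (p/(1-p)) * (((1-p)*D)/(2*p)) := by
          apply mul_le_mul_of_nonneg_left h2 (by positivity)
      _ = D/2 := by field_simp
  have hFβ₂le : F β₂ ≤ β₂ + Real.log ((1 - p) + p * Real.exp (-(β₂/2))) := by
    have hCpos : (0:ℝ) < Real.exp β₂ * ((1 - p) + p * Real.exp (-(β₂/2))) := by positivity
    have h := Fle β₂ _ hβ₂pos.le hCpos (fun N => Z_le hp0.le hp1.le hβ₂pos.le N)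
    rwa [Real.log_mul (Real.exp_ne_zero β₂) (by positivity), Real.log_exp] at h
  have hlog2 : Real.log ((1 - p) + p * Real.exp (-(β₂/2))) ≤ Real.log (1-p) + D/2 := by
    have hsplit : (1 - p) + p * Real.exp (-(β₂/2)) = (1-p) * (1 + (p/(1-p)) * Real.exp (-(β₂/2))) := by
      field_simp
    rw [hsplit, Real.log_mul (by positivity) (by positivity)]
    have h1 : Real.log (1 + (p/(1-p)) * Real.exp (-(β₂/2))) ≤ (p/(1-p)) * Real.exp (-(β₂/2)) := by
      have := Real.log_le_sub_one_of_pos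
        (show (0:ℝ) < 1 + (p/(1-p)) * Real.exp (-(β₂/2)) by positivity)
      linarith
    linarith [hexp2]
  have Flazy : ∀ β : ℝ, 0 ≤ β → β + Real.log (1-p) ≤ F β := by
    intro β hβ
    have h := Fge β ((1-p) * Real.exp β) hβ (by positivity)
      (fun N => Z_ge_lazy hp0.le hp1.le (β := β) N)
    rw [Real.log_mul (by positivity : (1-p) ≠ 0) (Real.exp_ne_zero β), Real.log_exp] at h
    linarith
  have hFβ₂ge := Flazy β₂ hβ₂pos.le
  have hFβ₂0 : 0 ≤ F β₂ := by
    have h1 : 1 ≤ β₂ + Real.log (1-p) := by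
      have : -Real.log (1-p) + 1 ≤ β₂ := by rw [← hlogq]; linarith
      linarith
    linarith
  have hkey₂ : ginv (F β₂) ≤ β₂ - D/2 := by
    have h1 := ginv_le (F β₂) hFβ₂0
    have h2 : F β₂ ≤ β₂ + Real.log (1-p) + D/2 := by linarith
    linarith [hDeq]
  have fc₂ : ginv (F β₂) / β₂ ≤ 1 - D/(2*β₂) := by
    rw [div_le_iff₀ hβ₂pos]
    have he : (1 - D/(2*β₂)) * β₂ = β₂ - D/2 := by field_simp
    rw [he]; exact hkey₂
  -- β₃
  set β₃ : ℝ := max (β₂ + 1) (2*β₂*L/D + 1) with hβ₃def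
  have hβ₃2 : β₂ < β₃ := lt_of_lt_of_le (by linarith) (le_max_left _ _)
  have hβ₃pos : 0 < β₃ := hβ₂pos.trans hβ₃2
  have hβ₃L : 2*β₂*L/D + 1 ≤ β₃ := le_max_right _ _
  have hFβ₃ge := Flazy β₃ hβ₃pos.le
  have hFβ₃0 : 0 ≤ F β₃ := by
    have h1 : -Real.log (1-p) + 1 ≤ β₂ := by rw [← hlogq]; linarith
    linarith
  have fc₃ : 1 - L/β₃ ≤ ginv (F β₃) / β₃ := by
    rw [le_div_iff₀ hβ₃pos]
    have h1 := ginv_ge_self (F β₃) hFβ₃0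
    have he : (1 - L/β₃) * β₃ = β₃ - L := by field_simp
    rw [he, hlogq]
    linarith
  have hmid : L/β₃ < D/(2*β₂) := by
    rw [div_lt_div_iff₀ hβ₃pos (by positivity)]
    have h1 : D * (2*β₂*L/D + 1) = 2*β₂*L + D := by
      field_simp
    have h2 : D * (2*β₂*L/D + 1) ≤ D * β₃ := mul_le_mul_of_nonneg_left hβ₃L hD.le
    have h4 : L * (2*β₂) = 2*β₂*L := by ring
    rw [h4]
    linarith
  refine ⟨β₁, β₂, β₃, hβ₁pos, hβ₂1, hβ₃2, ?_, ?_⟩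
  · calc ginv (F β₂) / β₂ ≤ 1 - D/(2*β₂) := fc₂
      _ < 1 := by
        have : 0 < D/(2*β₂) := by positivity
        linarith
      _ ≤ ginv (F β₁) / β₁ := fc₁
  · calc ginv (F β₂) / β₂ ≤ 1 - D/(2*β₂) := fc₂
      _ < 1 - L/β₃ := by linarith
      _ ≤ ginv (F β₃) / β₃ := fc₃
end
end
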